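/- arXiv:1109.6429 — 7 statements merged into one kernel-verified Lean document; each statement's English description precedes it below -/
import Mathlib

section
/- Let q be a prime power, n ≥ 2, and l ≥ 1. In SL_n(𝔽_q[[X]]) (with the topology induced entrywise from the power series ring), the l-th congruence subgroup — the kernel of the reduction homomorphism SL_n(𝔽_q[[X]]) → SL_n(𝔽_q[[X]]/(X^l)) — equals the topological closure of the subgroup generated by the elementary matrices 1 + a·E_{ij} with i ≠ j and a ∈ X^l·𝔽_q[[X]], together with the diagonal matrices of determinant 1 that are congruent to the identity modulo X^l. (This is the proposition on congruence subgroups, in its type A_{n-1} instance.) -/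
/-!
STATEMENT 3: In `SL_n(𝔽_q[[X]])` the l-th congruence subgroup equals the topological
closure of the subgroup generated by the elementary matrices `1 + a·E_{ij}` (i ≠ j,
a ∈ X^l·𝔽_q[[X]]) together with the diagonal matrices of determinant 1 congruent to
the identity modulo `X^l`.
-/

noncomputable section
open Matrix

variable (Fq : Type) [Field Fq] [Fintype Fq]

/-- `𝔽_q` is discrete. -/
instance : TopologicalSpace Fq := ⊥

/-- The coefficientwise (product) topology on `𝔽_q[[X]]`. -/
instance : TopologicalSpace (PowerSeries Fq) :=
  TopologicalSpace.induced (fun f k => PowerSeries.coeff k f) Pi.topologicalSpace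

/-- The entrywise topology on `SL_n(𝔽_q[[X]])`. -/
instance (n : ℕ) : TopologicalSpace (SpecialLinearGroup (Fin n) (PowerSeries Fq)) :=
  TopologicalSpace.induced
    ((↑) : SpecialLinearGroup (Fin n) (PowerSeries Fq) → Matrix (Fin n) (Fin n) (PowerSeries Fq))
    inferInstance

instance : DiscreteTopology Fq := ⟨rfl⟩

section Helpers
variable {S : Type*} [CommRing S] {n : ℕ}

lemma one_add_smul_mul {x : S} (hx : x * x = 0) (P Q : Matrix (Fin n) (Fin n) S) :
    (1 + x • P) * (1 + x • Q) = 1 + x • (P + Q) := by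
  have h0 : (x • P) * (x • Q) = 0 := by
    rw [smul_mul_assoc, mul_smul_comm, smul_smul, hx, zero_smul]
  rw [add_mul, one_mul, mul_add, mul_one, h0, add_zero, smul_add]
  abel

lemma list_prod_one_add_smul {x : S} (hx : x * x = 0) {α : Type*} (L : List α)
    (f : α → Matrix (Fin n) (Fin n) S) :
    (L.map (fun p => 1 + x • f p)).prod = 1 + x • (L.map f).sum := by
  induction L with
  | nil => simp
  | cons a t ih =>
      rw [List.map_cons, List.prod_cons, ih, List.map_cons, List.sum_cons,
        one_add_smul_mul hx]

lemma finset_prod_one_add_mul {x : S} (hx : x * x = 0) {α : Type*} (s : Finset α)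
    (a : α → S) : ∏ i ∈ s, (1 + x * a i) = 1 + x * ∑ i ∈ s, a i := by
  induction s using Finset.cons_induction with
  | empty => simp
  | cons i s hi ih =>
      rw [Finset.prod_cons, ih, Finset.sum_cons]
      linear_combination (a i * ∑ j ∈ s, a j) * hx

lemma det_one_add_smul_sq_zero {x : S} (hx : x * x = 0) (M : Matrix (Fin n) (Fin n) S) :
    det (1 + x • M) = 1 + x * trace M := by
  rw [Matrix.det_one_add_smul, pow_two, hx, mul_zero, add_zero, mul_comm]

lemma offdiag_sum_add_diagonal (B : Matrix (Fin n) (Fin n) S) :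
    (∑ p ∈ Finset.univ.filter (fun p : Fin n × Fin n => p.1 ≠ p.2),
      Matrix.single p.1 p.2 (B p.1 p.2)) + diagonal (fun i => B i i) = B := by
  ext i j
  rw [Matrix.add_apply, Matrix.sum_apply]
  by_cases hij : i = j
  · subst hij
    rw [Finset.sum_eq_zero, diagonal_apply_eq, zero_add]
    intro p hp
    rcases Finset.mem_filter.mp hp with ⟨-, hne⟩
    apply Matrix.single_apply_of_ne
    rintro ⟨h1, h2⟩
    exact hne (h1.trans h2.symm)
  · rw [diagonal_apply_ne _ hij, add_zero,
      Finset.sum_eq_single_of_mem (i, j)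
        (Finset.mem_filter.mpr ⟨Finset.mem_univ _, hij⟩)]
    · exact Matrix.single_apply_same i j _
    · intro p hp hne
      apply Matrix.single_apply_of_ne
      rintro ⟨h1, h2⟩
      exact hne (Prod.ext h1 h2)

lemma map_smul_matrix {R : Type*} [CommRing R] (f : R →+* S) (c : R)
    (M : Matrix (Fin n) (Fin n) R) : (c • M).map f = f c • M.map f := by
  ext i j
  simp [Matrix.map_apply, Matrix.smul_apply, smul_eq_mul]

lemma map_stdBasisMatrix {R : Type*} [CommRing R] (f : R →+* S) (i j : Fin n) (a : R) :
    (Matrix.single i j a).map f = Matrix.single i j (f a) := by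
  ext i' j'
  simp [Matrix.map_apply, Matrix.single, Matrix.of_apply, apply_ite f]

lemma map_one_add_stdBasisMatrix {R : Type*} [CommRing R] (f : R →+* S)
    (i j : Fin n) (a : R) :
    ((1 : Matrix (Fin n) (Fin n) R) + Matrix.single i j a).map f
      = 1 + Matrix.single i j (f a) := by
  have h1 : f 1 = 1 := map_one f
  have h0 : f 0 = 0 := map_zero f
  ext i' j'
  simp only [Matrix.map_apply, Matrix.add_apply, Matrix.one_apply, Matrix.single,
    Matrix.of_apply, map_add, apply_ite f, h1, h0]

lemma coe_map_list_prod {R : Type*} [CommRing R] (f : R →+* S)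
    (L : List (SpecialLinearGroup (Fin n) R)) :
    ((L.prod : SpecialLinearGroup (Fin n) R) : Matrix (Fin n) (Fin n) R).map f
      = (L.map (fun g : SpecialLinearGroup (Fin n) R =>
          ((g : Matrix (Fin n) (Fin n) R)).map f)).prod := by
  induction L with
  | nil =>
      simp only [List.prod_nil, List.map_nil]
      exact Matrix.map_one f (map_zero f) (map_one f)
  | cons a t ih =>
      rw [List.prod_cons, List.map_cons, List.prod_cons, ← ih,
        Matrix.SpecialLinearGroup.coe_mul, Matrix.map_mul]

lemma finset_toList_map_sum {α β : Type*} [AddCommMonoid β] (s : Finset α) (f : α → β) :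
    (s.toList.map f).sum = ∑ i ∈ s, f i := by
  rw [← Multiset.sum_coe, ← Multiset.map_coe, Finset.coe_toList]
  rfl

end Helpers

section Aux
open PowerSeries


/-- The generating set. -/
def genSet (n l : ℕ) : Set (SpecialLinearGroup (Fin n) (PowerSeries Fq)) :=
  {g : SpecialLinearGroup (Fin n) (PowerSeries Fq) |
      ∃ i j : Fin n, i ≠ j ∧ ∃ a ∈ Ideal.span {(PowerSeries.X : PowerSeries Fq) ^ l},
        (g : Matrix (Fin n) (Fin n) (PowerSeries Fq)) = 1 + Matrix.single i j a} ∪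
  {g : SpecialLinearGroup (Fin n) (PowerSeries Fq) |
      (∀ i j : Fin n, i ≠ j → (g : Matrix (Fin n) (Fin n) (PowerSeries Fq)) i j = 0) ∧
      ∀ i j : Fin n,
        Ideal.Quotient.mk (Ideal.span {(PowerSeries.X : PowerSeries Fq) ^ l})
            ((g : Matrix (Fin n) (Fin n) (PowerSeries Fq)) i j) =
          Ideal.Quotient.mk (Ideal.span {(PowerSeries.X : PowerSeries Fq) ^ l})
            ((1 : Matrix (Fin n) (Fin n) (PowerSeries Fq)) i j)}

variable {Fq}

lemma mk_pow_eq_iff (m : ℕ) (a b : PowerSeries Fq) :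
    Ideal.Quotient.mk (Ideal.span {(X : PowerSeries Fq) ^ m}) a =
      Ideal.Quotient.mk (Ideal.span {(X : PowerSeries Fq) ^ m}) b ↔
    ∀ k < m, coeff k a = coeff k b := by
  rw [Ideal.Quotient.mk_eq_mk_iff_sub_mem, Ideal.mem_span_singleton, X_pow_dvd_iff]
  constructor
  · intro h k hk
    have := h k hk
    rw [map_sub, sub_eq_zero] at this
    exact this
  · intro h k hk
    rw [map_sub, sub_eq_zero]
    exact h k hk

lemma mem_ker_iff {n l : ℕ} (g : SpecialLinearGroup (Fin n) (PowerSeries Fq)) :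
    g ∈ MonoidHom.ker (SpecialLinearGroup.map (n := Fin n)
        (Ideal.Quotient.mk (Ideal.span {(PowerSeries.X : PowerSeries Fq) ^ l}))) ↔
    ∀ i j : Fin n,
      Ideal.Quotient.mk (Ideal.span {(PowerSeries.X : PowerSeries Fq) ^ l})
          ((g : Matrix (Fin n) (Fin n) (PowerSeries Fq)) i j) =
        Ideal.Quotient.mk (Ideal.span {(PowerSeries.X : PowerSeries Fq) ^ l})
          ((1 : Matrix (Fin n) (Fin n) (PowerSeries Fq)) i j) := by
  rw [MonoidHom.mem_ker]
  refine (Matrix.SpecialLinearGroup.ext_iff _ _).trans ?_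
  simp [Matrix.map_apply, Matrix.one_apply, apply_ite (Ideal.Quotient.mk _)]


set_option maxHeartbeats 1000000 in
set_option synthInstance.maxHeartbeats 400000 in
lemma step {n l m : ℕ} (hn : 2 ≤ n) (hl : 1 ≤ l) (hlm : l ≤ m)
    (g h : SpecialLinearGroup (Fin n) (PowerSeries Fq))
    (hh : h ∈ Subgroup.closure (genSet Fq n l))
    (hc : ∀ i j : Fin n,
      Ideal.Quotient.mk (Ideal.span {(X : PowerSeries Fq) ^ m})
          ((g : Matrix (Fin n) (Fin n) (PowerSeries Fq)) i j)
        = Ideal.Quotient.mk (Ideal.span {(X : PowerSeries Fq) ^ m})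
          ((h : Matrix (Fin n) (Fin n) (PowerSeries Fq)) i j)) :
    ∃ h' ∈ Subgroup.closure (genSet Fq n l),
      ∀ i j : Fin n,
        Ideal.Quotient.mk (Ideal.span {(X : PowerSeries Fq) ^ (m + 1)})
            ((g : Matrix (Fin n) (Fin n) (PowerSeries Fq)) i j)
          = Ideal.Quotient.mk (Ideal.span {(X : PowerSeries Fq) ^ (m + 1)})
            ((h' : Matrix (Fin n) (Fin n) (PowerSeries Fq)) i j) := by
  classical
  have hm1 : 1 ≤ m := hl.trans hlm
  set R : Type := PowerSeries Fq with hR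
  set k : SpecialLinearGroup (Fin n) R := h⁻¹ * g with hkdef
  -- `k ≡ 1 mod X^m`
  have hk : ∀ i j : Fin n, (X : R) ^ m ∣
      ((k : Matrix (Fin n) (Fin n) R) i j - (1 : Matrix (Fin n) (Fin n) R) i j) := by
    have hgh : SpecialLinearGroup.map (n := Fin n)
        (Ideal.Quotient.mk (Ideal.span {(X : R) ^ m})) g =
        SpecialLinearGroup.map (n := Fin n)
        (Ideal.Quotient.mk (Ideal.span {(X : R) ^ m})) h := by
      apply Subtype.coe_injective
      ext i j
      simpa [Matrix.map_apply] using hc i j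
    have hk1 : SpecialLinearGroup.map (n := Fin n)
        (Ideal.Quotient.mk (Ideal.span {(X : R) ^ m})) k = 1 := by
      rw [hkdef, _root_.map_mul, _root_.map_inv, hgh, inv_mul_cancel]
    intro i j
    rw [← Ideal.mem_span_singleton, ← Ideal.Quotient.mk_eq_mk_iff_sub_mem]
    have := congrFun (congrFun (congrArg Subtype.val hk1) i) j
    simp only [SpecialLinearGroup.map_apply_coe, RingHom.mapMatrix_apply,
      Matrix.map_apply, SpecialLinearGroup.coe_one] at this
    rw [this]
    by_cases hij : i = j <;>
      simp [hij, Matrix.one_apply]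
  -- write `k = 1 + X^m • A`
  set A : Matrix (Fin n) (Fin n) R := Matrix.of (fun i j => (hk i j).choose) with hAdef
  have hA : (k : Matrix (Fin n) (Fin n) R) = 1 + (X : R) ^ m • A := by
    ext i j : 2
    have hs := (hk i j).choose_spec
    rw [Matrix.add_apply, Matrix.smul_apply, smul_eq_mul]
    have : A i j = (hk i j).choose := rfl
    rw [this, ← hs]
    exact (add_sub_cancel _ _).symm
  -- the quotient ring `S`
  set ρ : R →+* R ⧸ Ideal.span {(X : R) ^ (m + 1)} :=
    Ideal.Quotient.mk (Ideal.span {(X : R) ^ (m + 1)}) with hρdef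
  set x := ρ (X : R) ^ m with hxdef
  have hx : x * x = 0 := by
    rw [hxdef, ← _root_.map_pow, ← _root_.map_mul, ← pow_add,
      Ideal.Quotient.eq_zero_iff_mem, Ideal.mem_span_singleton]
    exact pow_dvd_pow X (by omega)
  set A' := A.map ρ with hA'def
  have hkmap : (k : Matrix (Fin n) (Fin n) R).map ρ = 1 + x • A' := by
    rw [hA]
    ext i j
    by_cases hij : i = j <;>
      simp [Matrix.map_apply, Matrix.add_apply, Matrix.smul_apply, smul_eq_mul,
        Matrix.one_apply, hij, hA'def, hxdef]
  -- trace condition from the determinant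
  have htr : x * trace A' = 0 := by
    have hdet' := RingHom.map_det ρ (k : Matrix (Fin n) (Fin n) R)
    rw [k.prop, _root_.map_one, RingHom.mapMatrix_apply] at hdet'
    rw [hkmap, det_one_add_smul_sq_zero hx] at hdet'
    exact add_eq_left.mp hdet'.symm
  -- the transvection part
  set offP : Finset (Fin n × Fin n) :=
    Finset.univ.filter (fun p : Fin n × Fin n => p.1 ≠ p.2) with hoffP
  set elem : Fin n × Fin n → SpecialLinearGroup (Fin n) R := fun p =>
    if hp : p.1 = p.2 then 1
    else ⟨Matrix.transvection p.1 p.2 ((X : R) ^ m * A p.1 p.2),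
      Matrix.det_transvection_of_ne p.1 p.2 hp _⟩ with helem
  set u : SpecialLinearGroup (Fin n) R := (offP.toList.map elem).prod with hu
  have hu_mem : u ∈ Subgroup.closure (genSet Fq n l) := by
    apply Subgroup.list_prod_mem
    intro w hw
    rcases List.mem_map.mp hw with ⟨p, hpL, rfl⟩
    have hne : p.1 ≠ p.2 := (Finset.mem_filter.mp (Finset.mem_toList.mp hpL)).2
    apply Subgroup.subset_closure
    left
    refine ⟨p.1, p.2, hne, (X : R) ^ m * A p.1 p.2, ?_, ?_⟩
    · rw [Ideal.mem_span_singleton]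
      exact Dvd.dvd.mul_right (pow_dvd_pow X hlm) _
    · rw [helem]
      simp only [dif_neg hne]
      exact congrArg Subtype.val (dif_neg hne)
  set Off : Matrix (Fin n) (Fin n) (R ⧸ Ideal.span {(X : R) ^ (m + 1)}) :=
    ∑ p ∈ offP, Matrix.single p.1 p.2 (A' p.1 p.2) with hOff
  have humap : (u : Matrix (Fin n) (Fin n) R).map ρ = 1 + x • Off := by
    rw [hu, coe_map_list_prod, List.map_map]
    have hmapped : List.map ((fun g : SpecialLinearGroup (Fin n) R =>
          ((g : Matrix (Fin n) (Fin n) R)).map ρ) ∘ elem) offP.toList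
        = List.map (fun p => 1 + x • Matrix.single p.1 p.2 (A' p.1 p.2)) offP.toList := by
      apply List.map_congr_left
      intro p hpL
      have hne : p.1 ≠ p.2 := (Finset.mem_filter.mp (Finset.mem_toList.mp hpL)).2
      have hcoe : ((elem p : SpecialLinearGroup (Fin n) R) : Matrix (Fin n) (Fin n) R)
          = 1 + Matrix.single p.1 p.2 ((X : R) ^ m * A p.1 p.2) := by
        rw [helem]; simp only [dif_neg hne]; exact congrArg Subtype.val (dif_neg hne)
      have hρXm' : ρ ((X : R) ^ m * A p.1 p.2) = x * ρ (A p.1 p.2) := by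
        rw [_root_.map_mul, _root_.map_pow, hxdef]
      have hA'e : A' p.1 p.2 = ρ (A p.1 p.2) := rfl
      simp only [Function.comp_apply, hcoe, map_one_add_stdBasisMatrix, hρXm',
        hA'e, Matrix.smul_single, smul_eq_mul]
    rw [hmapped, list_prod_one_add_smul hx, hOff, finset_toList_map_sum]
  -- the diagonal part
  have hXm0 : ∀ c : R, constantCoeff ((X : R) ^ m * c) = 0 := by
    intro c
    have hdvd : (X : R) ∣ (X : R) ^ m * c :=
      Dvd.dvd.mul_right (dvd_pow_self X (by omega)) _
    rw [← PowerSeries.coeff_zero_eq_constantCoeff_apply]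
    obtain ⟨e, he⟩ := hdvd
    rw [he]
    simp [PowerSeries.coeff_succ_X_mul]
  set i₀ : Fin n := ⟨0, by omega⟩ with hi₀
  set w : R := ∏ i ∈ Finset.univ.erase i₀, (1 + (X : R) ^ m * A i i) with hw
  have hwc : constantCoeff w = 1 := by
    rw [hw, map_prod]
    rw [Finset.prod_eq_one]
    intro i _
    rw [_root_.map_add, _root_.map_one, hXm0, add_zero]
  have hwu : IsUnit w := by
    rw [PowerSeries.isUnit_iff_constantCoeff, hwc]
    exact isUnit_one
  set t : R := ↑hwu.unit⁻¹ with ht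
  have htw : w * t = 1 := by
    rw [ht]
    exact hwu.mul_val_inv
  set dvec : Fin n → R := fun i => if i = i₀ then t else 1 + (X : R) ^ m * A i i
    with hdvec
  have hΔdet : det (diagonal dvec) = 1 := by
    rw [det_diagonal, ← Finset.mul_prod_erase Finset.univ dvec (Finset.mem_univ i₀)]
    have h1 : dvec i₀ = t := by rw [hdvec]; simp
    have h2 : ∏ i ∈ Finset.univ.erase i₀, dvec i = w := by
      rw [hw]
      apply Finset.prod_congr rfl
      intro i hi
      rw [hdvec]
      simp [Finset.mem_erase.mp hi |>.1]
    rw [h1, h2, mul_comm, htw]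
  set Δ : SpecialLinearGroup (Fin n) R := ⟨diagonal dvec, hΔdet⟩ with hΔ
  have hXl0 : ∀ c : R, Ideal.Quotient.mk (Ideal.span {(X : R) ^ l}) ((X : R) ^ m * c)
      = 0 := by
    intro c
    rw [Ideal.Quotient.eq_zero_iff_mem, Ideal.mem_span_singleton]
    exact Dvd.dvd.mul_right (pow_dvd_pow X hlm) _
  have hΔmem : Δ ∈ Subgroup.closure (genSet Fq n l) := by
    apply Subgroup.subset_closure
    right
    constructor
    · intro i j hij
      exact diagonal_apply_ne _ hij
    · intro i j
      by_cases hij : i = j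
      · subst hij
        rw [show ((Δ : Matrix (Fin n) (Fin n) R) i i) = dvec i from diagonal_apply_eq _ i,
          Matrix.one_apply_eq]
        have hone : ∀ i' : Fin n, i' ≠ i₀ →
            Ideal.Quotient.mk (Ideal.span {(X : R) ^ l}) (dvec i') = 1 := by
          intro i' hi'
          rw [hdvec]
          simp only [if_neg hi']
          rw [_root_.map_add, _root_.map_one, hXl0, add_zero]
        by_cases hii : i = i₀
        · subst hii
          have hd1 : dvec i₀ = t := by rw [hdvec]; simp
          rw [hd1]
          have hwl : Ideal.Quotient.mk (Ideal.span {(X : R) ^ l}) w = 1 := by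
            rw [hw, map_prod, Finset.prod_eq_one]
            intro i' _
            rw [_root_.map_add, _root_.map_one, hXl0, add_zero]
          have := congrArg (Ideal.Quotient.mk (Ideal.span {(X : R) ^ l})) htw
          rw [_root_.map_mul, hwl, one_mul, _root_.map_one] at this
          rw [this]
          exact (_root_.map_one _).symm
        · rw [hone i hii, _root_.map_one]
      · rw [show ((Δ : Matrix (Fin n) (Fin n) R) i j) = 0 from diagonal_apply_ne _ hij,
          Matrix.one_apply_ne hij, map_zero]
  -- image of Δ under ρ
  have hρXm : ∀ c : R, ρ ((X : R) ^ m * c) = x * ρ c := by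
    intro c
    rw [_root_.map_mul, _root_.map_pow, hxdef]
  set s : R ⧸ Ideal.span {(X : R) ^ (m + 1)} :=
    ∑ i ∈ Finset.univ.erase i₀, A' i i with hs
  have hρw : ρ w = 1 + x * s := by
    have hfac : ∀ i ∈ Finset.univ.erase i₀,
        ρ (1 + (X : R) ^ m * A i i) = 1 + x * A' i i := by
      intro i _
      rw [_root_.map_add, _root_.map_one, hρXm]
      rfl
    rw [hw, map_prod, Finset.prod_congr rfl hfac, finset_prod_one_add_mul hx, hs]
  have htrace : trace A' = A' i₀ i₀ + s := by
    rw [hs, Matrix.trace]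
    rw [← Finset.add_sum_erase Finset.univ _ (Finset.mem_univ i₀)]
    rfl
  have hxs : x * s = -(x * A' i₀ i₀) := by
    have h0 : x * (A' i₀ i₀ + s) = 0 := htrace ▸ htr
    linear_combination h0
  have hρt : ρ t = 1 + x * A' i₀ i₀ := by
    have hwt : ρ w * ρ t = 1 := by rw [← _root_.map_mul, htw, _root_.map_one]
    have haux : (1 + x * s) * (1 - x * s) = 1 := by
      linear_combination (-(s * s)) * hx
    calc ρ t = ((1 + x * s) * (1 - x * s)) * ρ t := by rw [haux, one_mul]
      _ = (1 - x * s) * ((1 + x * s) * ρ t) := by ring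
      _ = (1 - x * s) * 1 := by rw [← hρw, hwt]
      _ = 1 + x * A' i₀ i₀ := by rw [hxs]; ring
  have hΔmap : (Δ : Matrix (Fin n) (Fin n) R).map ρ
      = 1 + x • diagonal (fun i => A' i i) := by
    have : (Δ : Matrix (Fin n) (Fin n) R) = diagonal dvec := rfl
    rw [this, Matrix.diagonal_map (map_zero ρ)]
    ext i j
    by_cases hij : i = j
    · subst hij
      rw [diagonal_apply_eq, Matrix.add_apply, Matrix.smul_apply, Matrix.one_apply_eq,
        diagonal_apply_eq, smul_eq_mul]
      by_cases hii : i = i₀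
      · subst hii
        rw [hdvec]; simp only [if_pos rfl]; exact hρt
      · rw [hdvec]; simp only [if_neg hii]
        rw [_root_.map_add, _root_.map_one, hρXm]
        rfl
    · rw [diagonal_apply_ne _ hij, Matrix.add_apply, Matrix.smul_apply,
        Matrix.one_apply_ne hij, diagonal_apply_ne _ hij, smul_zero, add_zero]
  -- assemble
  refine ⟨h * (u * Δ), Subgroup.mul_mem _ hh (Subgroup.mul_mem _ hu_mem hΔmem), ?_⟩
  have hfinal : (g : Matrix (Fin n) (Fin n) R).map ρ
      = ((h * (u * Δ) : SpecialLinearGroup (Fin n) R) : Matrix (Fin n) (Fin n) R).map ρ := by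
    have hg : g = h * k := by rw [hkdef, mul_inv_cancel_left]
    have hOffD : Off + diagonal (fun i => A' i i) = A' := by
      rw [hOff, hoffP]
      exact offdiag_sum_add_diagonal A'
    calc (g : Matrix (Fin n) (Fin n) R).map ρ
        = ((h : Matrix (Fin n) (Fin n) R) * (k : Matrix (Fin n) (Fin n) R)).map ρ := by
          rw [hg]; rfl
      _ = (h : Matrix (Fin n) (Fin n) R).map ρ * (k : Matrix (Fin n) (Fin n) R).map ρ := by
          rw [← RingHom.mapMatrix_apply, ← RingHom.mapMatrix_apply,
            ← RingHom.mapMatrix_apply, _root_.map_mul]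
      _ = (h : Matrix (Fin n) (Fin n) R).map ρ * (1 + x • A') := by rw [hkmap]
      _ = (h : Matrix (Fin n) (Fin n) R).map ρ
            * ((1 + x • Off) * (1 + x • diagonal (fun i => A' i i))) := by
          rw [one_add_smul_mul hx, hOffD]
      _ = (h : Matrix (Fin n) (Fin n) R).map ρ
            * ((u : Matrix (Fin n) (Fin n) R).map ρ * (Δ : Matrix (Fin n) (Fin n) R).map ρ) := by
          rw [humap, hΔmap]
      _ = ((h * (u * Δ) : SpecialLinearGroup (Fin n) R) : Matrix (Fin n) (Fin n) R).map ρ := by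
          rw [← RingHom.mapMatrix_apply, ← RingHom.mapMatrix_apply,
            ← RingHom.mapMatrix_apply, ← RingHom.mapMatrix_apply,
            ← _root_.map_mul, ← _root_.map_mul]
          rfl
  intro i j
  have := congrFun (congrFun hfinal i) j
  simpa [Matrix.map_apply] using this




lemma approx {n l : ℕ} (hn : 2 ≤ n) (hl : 1 ≤ l)
    (g : SpecialLinearGroup (Fin n) (PowerSeries Fq))
    (hg : g ∈ MonoidHom.ker (SpecialLinearGroup.map (n := Fin n)
      (Ideal.Quotient.mk (Ideal.span {(PowerSeries.X : PowerSeries Fq) ^ l}))))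
    (d : ℕ) :
    ∃ h ∈ Subgroup.closure (genSet Fq n l),
      ∀ i j : Fin n,
        Ideal.Quotient.mk (Ideal.span {(X : PowerSeries Fq) ^ (l + d)})
            ((g : Matrix (Fin n) (Fin n) (PowerSeries Fq)) i j)
          = Ideal.Quotient.mk (Ideal.span {(X : PowerSeries Fq) ^ (l + d)})
            ((h : Matrix (Fin n) (Fin n) (PowerSeries Fq)) i j) := by
  induction d with
  | zero =>
      refine ⟨1, Subgroup.one_mem _, ?_⟩
      intro i j
      have := (mem_ker_iff (l := l) g).mp hg i j
      simpa using this
  | succ d ih =>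
      obtain ⟨h, hh, hc⟩ := ih
      obtain ⟨h', hh', hc'⟩ := step hn hl (Nat.le_add_right l d) g h hh hc
      exact ⟨h', hh', hc'⟩



lemma continuous_coeff_entry {n : ℕ} (i j : Fin n) (k : ℕ) :
    Continuous (fun g : SpecialLinearGroup (Fin n) (PowerSeries Fq) =>
      PowerSeries.coeff k ((g : Matrix (Fin n) (Fin n) (PowerSeries Fq)) i j)) := by
  have h1 : Continuous ((↑) : SpecialLinearGroup (Fin n) (PowerSeries Fq) →
      Matrix (Fin n) (Fin n) (PowerSeries Fq)) := continuous_induced_dom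
  have h2 := h1.matrix_elem i j
  have h3 : Continuous (fun r : PowerSeries Fq => (fun k' => PowerSeries.coeff k' r)) :=
    continuous_induced_dom
  exact (continuous_apply k).comp (h3.comp h2)

lemma isClosed_ker {n l : ℕ} :
    IsClosed ((MonoidHom.ker (SpecialLinearGroup.map (n := Fin n)
      (Ideal.Quotient.mk (Ideal.span {(PowerSeries.X : PowerSeries Fq) ^ l})))) :
      Set (SpecialLinearGroup (Fin n) (PowerSeries Fq))) := by
  have hset : ((MonoidHom.ker (SpecialLinearGroup.map (n := Fin n)
      (Ideal.Quotient.mk (Ideal.span {(PowerSeries.X : PowerSeries Fq) ^ l})))) :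
      Set (SpecialLinearGroup (Fin n) (PowerSeries Fq))) =
      ⋂ (i : Fin n) (j : Fin n) (k : ℕ) (_ : k < l),
        {g : SpecialLinearGroup (Fin n) (PowerSeries Fq) |
          PowerSeries.coeff k ((g : Matrix (Fin n) (Fin n) (PowerSeries Fq)) i j)
            = PowerSeries.coeff k ((1 : Matrix (Fin n) (Fin n) (PowerSeries Fq)) i j)} := by
    ext g
    simp only [Set.mem_iInter, Set.mem_setOf_eq, SetLike.mem_coe]
    rw [mem_ker_iff]
    constructor
    · intro hgk i j k hk
      exact (mk_pow_eq_iff l _ _).mp (hgk i j) k hk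
    · intro hco i j
      exact (mk_pow_eq_iff l _ _).mpr (fun k hk => hco i j k hk)
  rw [hset]
  refine isClosed_iInter (fun i => isClosed_iInter (fun j =>
    isClosed_iInter (fun k => isClosed_iInter (fun _ => ?_))))
  exact isClosed_eq (continuous_coeff_entry i j k) continuous_const

lemma tendsto_of_coeff_eventually {n l : ℕ} (hl : 1 ≤ l)
    (g : SpecialLinearGroup (Fin n) (PowerSeries Fq))
    (hseq : ℕ → SpecialLinearGroup (Fin n) (PowerSeries Fq))
    (hco : ∀ d (i j : Fin n) (k : ℕ), k < l + d →
      PowerSeries.coeff k ((hseq d : Matrix (Fin n) (Fin n) (PowerSeries Fq)) i j)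
        = PowerSeries.coeff k ((g : Matrix (Fin n) (Fin n) (PowerSeries Fq)) i j)) :
    Filter.Tendsto hseq Filter.atTop (nhds g) := by
  erw [nhds_induced ((↑) : SpecialLinearGroup (Fin n) (PowerSeries Fq) →
    Matrix (Fin n) (Fin n) (PowerSeries Fq)) g, Filter.tendsto_comap_iff]
  erw [tendsto_pi_nhds]
  intro i
  rw [tendsto_pi_nhds]
  intro j
  rw [nhds_induced (fun (f : PowerSeries Fq) k => PowerSeries.coeff k f),
    Filter.tendsto_comap_iff]
  rw [tendsto_pi_nhds]
  intro k
  rw [nhds_discrete, Filter.tendsto_pure]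
  refine Filter.eventually_atTop.mpr ⟨k, fun d hd => ?_⟩
  exact hco d i j k (by omega)





end Aux

set_option maxHeartbeats 1000000 in
set_option synthInstance.maxHeartbeats 400000 in
theorem congruenceSubgroup_eq_closure
    (q n l : ℕ) (hq : ∃ p k : ℕ, p.Prime ∧ 0 < k ∧ q = p ^ k)
    (hcard : Fintype.card Fq = q) (hn : 2 ≤ n) (hl : 1 ≤ l) :
    ((MonoidHom.ker (SpecialLinearGroup.map (n := Fin n)
        (Ideal.Quotient.mk (Ideal.span {(PowerSeries.X : PowerSeries Fq) ^ l})))) :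
      Set (SpecialLinearGroup (Fin n) (PowerSeries Fq))) =
      closure ((Subgroup.closure
        ({g : SpecialLinearGroup (Fin n) (PowerSeries Fq) |
            ∃ i j : Fin n, i ≠ j ∧ ∃ a ∈ Ideal.span {(PowerSeries.X : PowerSeries Fq) ^ l},
              (g : Matrix (Fin n) (Fin n) (PowerSeries Fq)) = 1 + Matrix.single i j a} ∪
         {g : SpecialLinearGroup (Fin n) (PowerSeries Fq) |
            (∀ i j : Fin n, i ≠ j → (g : Matrix (Fin n) (Fin n) (PowerSeries Fq)) i j = 0) ∧
            ∀ i j : Fin n,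
              Ideal.Quotient.mk (Ideal.span {(PowerSeries.X : PowerSeries Fq) ^ l})
                  ((g : Matrix (Fin n) (Fin n) (PowerSeries Fq)) i j) =
                Ideal.Quotient.mk (Ideal.span {(PowerSeries.X : PowerSeries Fq) ^ l})
                  ((1 : Matrix (Fin n) (Fin n) (PowerSeries Fq)) i j)})) :
        Set (SpecialLinearGroup (Fin n) (PowerSeries Fq))) := by
  have hgen : ({g : SpecialLinearGroup (Fin n) (PowerSeries Fq) |
            ∃ i j : Fin n, i ≠ j ∧ ∃ a ∈ Ideal.span {(PowerSeries.X : PowerSeries Fq) ^ l},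
              (g : Matrix (Fin n) (Fin n) (PowerSeries Fq)) = 1 + Matrix.single i j a} ∪
         {g : SpecialLinearGroup (Fin n) (PowerSeries Fq) |
            (∀ i j : Fin n, i ≠ j → (g : Matrix (Fin n) (Fin n) (PowerSeries Fq)) i j = 0) ∧
            ∀ i j : Fin n,
              Ideal.Quotient.mk (Ideal.span {(PowerSeries.X : PowerSeries Fq) ^ l})
                  ((g : Matrix (Fin n) (Fin n) (PowerSeries Fq)) i j) =
                Ideal.Quotient.mk (Ideal.span {(PowerSeries.X : PowerSeries Fq) ^ l})
                  ((1 : Matrix (Fin n) (Fin n) (PowerSeries Fq)) i j)})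
      = genSet Fq n l := rfl
  rw [hgen]
  apply Set.Subset.antisymm
  · -- the congruence subgroup is contained in the closure
    intro g hg
    have hgk : g ∈ MonoidHom.ker (SpecialLinearGroup.map (n := Fin n)
        (Ideal.Quotient.mk (Ideal.span {(PowerSeries.X : PowerSeries Fq) ^ l}))) := hg
    choose hseq hmem hcong using approx hn hl g hgk
    have hcoeff : ∀ d (i j : Fin n) (k : ℕ), k < l + d →
        PowerSeries.coeff k ((hseq d : Matrix (Fin n) (Fin n) (PowerSeries Fq)) i j)
          = PowerSeries.coeff k ((g : Matrix (Fin n) (Fin n) (PowerSeries Fq)) i j) :=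
      fun d i j k hk => ((mk_pow_eq_iff (l + d) _ _).mp (hcong d i j) k hk).symm
    exact mem_closure_of_tendsto (tendsto_of_coeff_eventually hl g hseq hcoeff)
      (Filter.Eventually.of_forall (fun d => hmem d))
  · -- the closure is contained in the congruence subgroup
    apply closure_minimal _ isClosed_ker
    have hsub : genSet Fq n l ⊆
        ((MonoidHom.ker (SpecialLinearGroup.map (n := Fin n)
          (Ideal.Quotient.mk (Ideal.span {(PowerSeries.X : PowerSeries Fq) ^ l})))) :
          Set (SpecialLinearGroup (Fin n) (PowerSeries Fq))) := by
      rintro g (⟨i, j, hij, a, ha, hco⟩ | ⟨_, hg2⟩)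
      · rw [SetLike.mem_coe, mem_ker_iff]
        intro i' j'
        rw [hco, Matrix.add_apply, map_add]
        have hz : Ideal.Quotient.mk (Ideal.span {(PowerSeries.X : PowerSeries Fq) ^ l})
            (Matrix.single i j a i' j') = 0 := by
          by_cases hc : i = i' ∧ j = j'
          · simp only [Matrix.single, Matrix.of_apply, if_pos hc]
            exact Ideal.Quotient.eq_zero_iff_mem.mpr ha
          · simp only [Matrix.single, Matrix.of_apply, if_neg hc, map_zero]
        rw [hz, add_zero]
      · exact (mem_ker_iff g).mpr hg2
    exact fun g hg => (Subgroup.closure_le (MonoidHom.ker (SpecialLinearGroup.map (n := Fin n)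
      (Ideal.Quotient.mk (Ideal.span {(PowerSeries.X : PowerSeries Fq) ^ l}))))).mpr hsub hg
end
end

section
/- Let p > 3 be a prime, q > 9 a power of p, and n ≥ 3 (so that SL_n has rank at least 2). Let O = 𝔽_q[[X]] and let H be a subgroup of SL_n(O) such that the reduction homomorphism ξ₁ : SL_n(O) → SL_n(𝔽_q) (induced by the constant-coefficient map) restricts to an isomorphism from H onto SL_n(𝔽_q). Then there exists g ∈ GL_n(O) such that g·H·g⁻¹ = SL_n(𝔽_q), where SL_n(𝔽_q) is viewed as the subgroup of SL_n(O) consisting of matrices with constant (degree-zero) entries. (This is part (ii), for type A_{n-1}, of the theorem lifting the finite subgroup 𝔾(𝔽_q).) -/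
/-!
STATEMENT 5: If p > 3, q > 9 a power of p, n ≥ 3, and H ≤ SL_n(𝔽_q[[X]]) maps
isomorphically onto SL_n(𝔽_q) under the reduction ξ₁, then H is conjugate to the
constant subgroup SL_n(𝔽_q) by an element of GL_n(𝔽_q[[X]]).
-/

noncomputable section
open Matrix

variable (Fq : Type) [Field Fq] [Fintype Fq] (n : ℕ)

/-- The reduction map `ξ₁ : SL_n(O) → SL_n(𝔽_q)` induced by the constant-coefficient map. -/
def xi1 : SpecialLinearGroup (Fin n) (PowerSeries Fq) →* SpecialLinearGroup (Fin n) Fq :=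
  SpecialLinearGroup.map (n := Fin n) (PowerSeries.constantCoeff (R := Fq))

/-- `SL_n(𝔽_q)` viewed inside `SL_n(O)` as the matrices with constant entries. -/
def SLconst : Subgroup (SpecialLinearGroup (Fin n) (PowerSeries Fq)) :=
  (SpecialLinearGroup.map (n := Fin n) (PowerSeries.C (R := Fq))).range

/-! ### Auxiliary general lemmas -/

section FactA
open Polynomial
variable {ι : Type*} [DecidableEq ι] [Fintype ι]
variable {R : Type*} [CommRing R] (p : ℕ) [Fact p.Prime] [CharP R p]

theorem my_matPolyEquiv_eq_X_pow_sub_C' (k : ℕ) (M : Matrix ι ι R) :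
    matPolyEquiv ((expand R k : R[X] →+* R[X]).mapMatrix (charmatrix (M ^ k))) =
      X ^ k - C (M ^ k) := by
  ext m i j
  rw [coeff_sub, coeff_C, matPolyEquiv_coeff_apply, RingHom.mapMatrix_apply, Matrix.map_apply,
    AlgHom.coe_toRingHom, Matrix.sub_apply, coeff_X_pow]
  by_cases hij : i = j
  · rw [hij, charmatrix_apply_eq, map_sub, expand_C, expand_X, coeff_sub, coeff_X_pow, coeff_C]
    split_ifs with mp m0 <;> simp only [Matrix.one_apply_eq, Matrix.zero_apply]
  · rw [charmatrix_apply_ne _ _ _ hij, map_neg, expand_C, coeff_neg, coeff_C]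
    split_ifs with m0 mp <;>
      simp only [hij, zero_sub, Matrix.zero_apply, sub_zero, neg_zero, Matrix.one_apply_ne, Ne,
        not_false_iff]

theorem my_charpoly_pow_char [Nonempty ι] (M : Matrix ι ι R) :
    M.charpoly ^ p = expand R p ((M ^ p).charpoly) := by
  have h1 : matPolyEquiv (charmatrix M ^ p) = X ^ p - Polynomial.C (M ^ p) := by
    rw [map_pow, matPolyEquiv_charmatrix,
      sub_pow_char_of_commute p (Polynomial.commute_X (Polynomial.C M)), ← map_pow]
  have h2 := my_matPolyEquiv_eq_X_pow_sub_C' p M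
  have h3 : charmatrix M ^ p = (expand R p : R[X] →+* R[X]).mapMatrix (charmatrix (M ^ p)) :=
    matPolyEquiv.injective (h1.trans h2.symm)
  calc M.charpoly ^ p = (charmatrix M ^ p).det := by rw [Matrix.det_pow]; rfl
    _ = expand R p ((M ^ p).charpoly) := by
        rw [h3, ← RingHom.map_det]; rfl

theorem my_trace_pow_char [Nonempty ι] (M : Matrix ι ι R) :
    Matrix.trace (M ^ p) = Matrix.trace M ^ p := by
  haveI : ExpChar R p := ExpChar.prime Fact.out
  have hc := my_charpoly_pow_char p M
  set N := Fintype.card ι with hN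
  have hcoeff := congrArg (fun f : R[X] => f.coeff ((N - 1) * p)) hc
  rw [← map_frobenius_expand (p := p), coeff_map, coeff_expand (Fact.out : p.Prime).pos,
    coeff_expand (Fact.out : p.Prime).pos] at hcoeff
  simp only [Nat.mul_div_cancel _ (Fact.out : p.Prime).pos, dvd_mul_left, if_pos] at hcoeff
  rw [Matrix.trace_eq_neg_charpoly_coeff, Matrix.trace_eq_neg_charpoly_coeff, ← hcoeff]
  rw [frobenius_def]
  rw [neg_pow, neg_one_pow_expChar R p]
  ring

end FactA

section PS
variable {K : Type*} [Field K] (p : ℕ) [Fact p.Prime] [CharP K p]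

omit [Fact p.Prime] [CharP K p] in
lemma myC_injective : Function.Injective (PowerSeries.C (R := K)) := fun a b h => by
  simpa using congrArg (PowerSeries.constantCoeff (R := K)) h

omit [Fact p.Prime] in
lemma psCharP : CharP (PowerSeries K) p :=
  charP_of_injective_ringHom (myC_injective (K := K)) p

lemma frob_iter_inj {O : Type*} [CommRing O] [IsDomain O] [CharP O p] (e : ℕ) {x y : O}
    (h : x ^ p ^ e = y ^ p ^ e) : x = y := by
  have h2 : (x - y) ^ p ^ e = 0 := by
    rw [sub_pow_char_pow, h, sub_self]
  have h3 : x - y = 0 := pow_eq_zero_iff (pow_ne_zero e (Nat.Prime.ne_zero Fact.out)) |>.mp h2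
  exact sub_eq_zero.mp h3

lemma eq_C_of_frob_fixed (d : ℕ) (hd : 0 < d) (y : PowerSeries K) (h : y ^ p ^ d = y) :
    y = PowerSeries.C (R := K) (PowerSeries.constantCoeff (R := K) y) := by
  classical
  haveI : CharP (PowerSeries K) p := psCharP p
  set c := PowerSeries.constantCoeff (R := K) y with hc
  set z := y - PowerSeries.C (R := K) c with hzdef
  have hcfix : (PowerSeries.C (R := K) c) ^ p ^ d = PowerSeries.C (R := K) c := by
    rw [← map_pow]
    congr 1
    simpa [hc] using congrArg (PowerSeries.constantCoeff (R := K)) h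
  have hz : z ^ p ^ d = z := by
    rw [hzdef, sub_pow_char_pow, h, hcfix]
  have hz0 : PowerSeries.constantCoeff (R := K) z = 0 := by
    simp [hzdef, hc]
  have hzz : z = 0 := by
    by_contra hne
    have hex : ∃ k, (PowerSeries.coeff (R := K) k) z ≠ 0 := by
      contrapose! hne
      exact PowerSeries.ext fun k => by simpa using hne k
    set k0 := Nat.find hex with hk0def
    have hk0 : (PowerSeries.coeff (R := K) k0) z ≠ 0 := Nat.find_spec hex
    have hk0pos : 0 < k0 := by
      rcases Nat.eq_zero_or_pos k0 with h' | h'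
      · exfalso; apply hk0; rw [h']; simpa using hz0
      · exact h'
    have hdvd : (PowerSeries.X : PowerSeries K) ^ k0 ∣ z := by
      rw [PowerSeries.X_pow_dvd_iff]
      intro m hm
      by_contra hne2
      exact Nat.find_min hex hm hne2
    obtain ⟨w, hw⟩ := hdvd
    apply hk0
    have hple : k0 + 1 ≤ k0 * p ^ d := by
      have hp2 : 2 ≤ p ^ d := by
        calc 2 ≤ p := (Fact.out : p.Prime).two_le
        _ ≤ p ^ d := Nat.le_self_pow (by omega) p
      nlinarith
    have hdvd2 : (PowerSeries.X : PowerSeries K) ^ (k0 + 1) ∣ z := by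
      calc (PowerSeries.X : PowerSeries K) ^ (k0+1) ∣ PowerSeries.X ^ (k0 * p ^ d) :=
            pow_dvd_pow _ hple
        _ ∣ z := by
            rw [← hz, hw, mul_pow, ← pow_mul]
            exact Dvd.intro _ rfl
    exact PowerSeries.X_pow_dvd_iff.mp hdvd2 k0 (Nat.lt_succ_self k0)
  rw [← sub_eq_zero]
  exact hzz

end PS

lemma span_SL (F : Type*) [Field F] (m : ℕ) (hm : 2 ≤ m) :
    Submodule.span F (Set.range
      (fun s : Matrix.SpecialLinearGroup (Fin m) F => (s : Matrix (Fin m) (Fin m) F))) = ⊤ := by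
  classical
  rw [eq_top_iff]
  intro M _
  rw [matrix_eq_sum_single M]
  apply Submodule.sum_mem
  intro i _
  apply Submodule.sum_mem
  intro j _
  have hsm : Matrix.single i j (M i j) = (M i j) • Matrix.single i j (1 : F) := by
    simp [Matrix.smul_single]
  rw [hsm]
  apply Submodule.smul_mem
  by_cases hij : i = j
  · subst hij
    have hk : ∃ k : Fin m, k ≠ i := by
      haveI : Nontrivial (Fin m) := Fin.nontrivial_iff_two_le.mpr hm
      exact exists_ne i
    obtain ⟨k, hk⟩ := hk
    set T1 : Matrix.SpecialLinearGroup (Fin m) F :=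
      ⟨Matrix.transvection i k (1 : F), Matrix.det_transvection_of_ne i k (Ne.symm hk) 1⟩ with hT1
    set T2 : Matrix.SpecialLinearGroup (Fin m) F :=
      ⟨Matrix.transvection k i (1 : F), Matrix.det_transvection_of_ne k i hk 1⟩ with hT2
    have key : Matrix.single i i (1 : F) =
        (↑(T1 * T2) : Matrix (Fin m) (Fin m) F) - ↑T1 - ↑T2 + ↑(1 : Matrix.SpecialLinearGroup (Fin m) F) := by
      rw [Matrix.SpecialLinearGroup.coe_mul, Matrix.SpecialLinearGroup.coe_one]
      show _ = Matrix.transvection i k 1 * Matrix.transvection k i 1 - Matrix.transvection i k 1 - Matrix.transvection k i 1 + 1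
      have hmul : Matrix.single i k (1:F) * Matrix.single k i (1:F)
          = Matrix.single i i (1:F) := by
        rw [Matrix.single_mul_single_same]
        norm_num
      simp only [Matrix.transvection]
      rw [← hmul]
      noncomm_ring
    rw [key]
    refine Submodule.add_mem _ (Submodule.sub_mem _ (Submodule.sub_mem _ ?_ ?_) ?_) ?_ <;>
      exact Submodule.subset_span ⟨_, rfl⟩
  · set T1 : Matrix.SpecialLinearGroup (Fin m) F :=
      ⟨Matrix.transvection i j (1 : F), Matrix.det_transvection_of_ne i j hij 1⟩ with hT1
    have key : Matrix.single i j (1 : F) =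
        (↑T1 : Matrix (Fin m) (Fin m) F) - ↑(1 : Matrix.SpecialLinearGroup (Fin m) F) := by
      rw [Matrix.SpecialLinearGroup.coe_one]
      show _ = Matrix.transvection i j 1 - 1
      simp only [Matrix.transvection]
      abel
    rw [key]
    exact Submodule.sub_mem _ (Submodule.subset_span ⟨_, rfl⟩) (Submodule.subset_span ⟨_, rfl⟩)

set_option maxHeartbeats 1000000

theorem conjugate_finite_subgroup_to_SL_Fq
    (p q : ℕ) (hp : p.Prime) (hp3 : 3 < p) (hq : ∃ k : ℕ, 0 < k ∧ q = p ^ k) (hq9 : 9 < q)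
    [CharP Fq p] (hcard : Fintype.card Fq = q) (hn : 3 ≤ n)
    (H : Subgroup (SpecialLinearGroup (Fin n) (PowerSeries Fq)))
    (hinj : Function.Injective (fun h : ↥H => xi1 Fq n (h : SpecialLinearGroup (Fin n) (PowerSeries Fq))))
    (hsurj : Function.Surjective (fun h : ↥H => xi1 Fq n (h : SpecialLinearGroup (Fin n) (PowerSeries Fq)))) :
    ∃ g : (Matrix (Fin n) (Fin n) (PowerSeries Fq))ˣ,
      {x : SpecialLinearGroup (Fin n) (PowerSeries Fq) |
          ∃ h ∈ H, (x : Matrix (Fin n) (Fin n) (PowerSeries Fq)) =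
            (g : Matrix (Fin n) (Fin n) (PowerSeries Fq)) * h *
              ((g⁻¹ : (Matrix (Fin n) (Fin n) (PowerSeries Fq))ˣ) :
                Matrix (Fin n) (Fin n) (PowerSeries Fq))}
        = (SLconst Fq n : Set (SpecialLinearGroup (Fin n) (PowerSeries Fq))) := by
  classical
  haveI hfact : Fact p.Prime := ⟨hp⟩
  haveI : NeZero n := ⟨by omega⟩
  haveI : CharP (PowerSeries Fq) p := psCharP p
  set cc : PowerSeries Fq →+* Fq := (PowerSeries.constantCoeff (R := Fq)) with hccdef
  set CF : Fq →+* PowerSeries Fq := (PowerSeries.C (R := Fq)) with hCFdef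
  -- the group-theoretic section σ of ξ₁ with image H
  set φ : ↥H →* SpecialLinearGroup (Fin n) Fq := (xi1 Fq n).comp H.subtype with hφdef
  have hφbij : Function.Bijective φ := ⟨hinj, hsurj⟩
  set e := MulEquiv.ofBijective φ hφbij with hedef
  set σ : SpecialLinearGroup (Fin n) Fq →* SpecialLinearGroup (Fin n) (PowerSeries Fq) :=
    H.subtype.comp e.symm.toMonoidHom with hσdef
  have hσH : ∀ s, (σ s) ∈ H := fun s => (e.symm s).2
  have hconj : ∀ s, xi1 Fq n (σ s) = s := fun s => e.apply_symm_apply s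
  have hHσ : ∀ h : SpecialLinearGroup (Fin n) (PowerSeries Fq), h ∈ H → ∃ s, σ s = h := by
    intro h hh
    refine ⟨e ⟨h, hh⟩, ?_⟩
    show (H.subtype) (e.symm (e ⟨h, hh⟩)) = h
    rw [e.symm_apply_apply]
    rfl
  -- matrix versions
  set Ms : SpecialLinearGroup (Fin n) Fq → Matrix (Fin n) (Fin n) (PowerSeries Fq) :=
    fun s => ↑(σ s) with hMsdef
  set Cm : Matrix (Fin n) (Fin n) Fq → Matrix (Fin n) (Fin n) (PowerSeries Fq) :=
    fun a => a.map CF with hCmdef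
  have hMmul : ∀ s t, Ms (s * t) = Ms s * Ms t := fun s t => by
    simp only [hMsdef, map_mul σ, Matrix.SpecialLinearGroup.coe_mul]
  have hMpow : ∀ s (k : ℕ), Ms (s ^ k) = Ms s ^ k := fun s k => by
    simp only [hMsdef, map_pow σ, Matrix.SpecialLinearGroup.coe_pow]
  have hMred : ∀ s, (Ms s).map cc = (s : Matrix (Fin n) (Fin n) Fq) := fun s => by
    conv_rhs => rw [← hconj s]
    rfl
  have hCmul : ∀ a b, Cm (a * b) = Cm a * Cm b := fun a b => by
    simp only [hCmdef]
    exact Matrix.map_mul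
  have htrCm : ∀ a : Matrix (Fin n) (Fin n) Fq, (Cm a).trace = CF a.trace := fun a => by
    simp [hCmdef, Matrix.trace, Matrix.map_apply, map_sum, Matrix.diag]
  have htrcc : ∀ A : Matrix (Fin n) (Fin n) (PowerSeries Fq), (A.map cc).trace = cc A.trace :=
    fun A => by
    simp [Matrix.trace, Matrix.map_apply, map_sum, Matrix.diag]
  -- Step 1 : traces of elements of H are constant power series
  have htr : ∀ s, (Ms s).trace = CF ((s : Matrix (Fin n) (Fin n) Fq)).trace := by
    intro s
    set y := (Ms s).trace with hy
    have hpow : ∀ k : ℕ, y ^ p ^ k = (Ms (s ^ p ^ k)).trace := by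
      intro k
      induction k with
      | zero => simp [hy]
      | succ k ih =>
        have h1 : y ^ p ^ (k+1) = (y ^ p ^ k) ^ p := by rw [← pow_mul, pow_succ]
        rw [h1, ih, ← my_trace_pow_char p, ← hMpow, ← pow_mul, ← pow_succ]
    have key : ∀ a b : ℕ, a < b → s ^ p ^ a = s ^ p ^ b →
        y = CF ((s : Matrix (Fin n) (Fin n) Fq)).trace := by
      intro a b hab heq
      have h1 : (y ^ p ^ (b - a)) ^ p ^ a = y ^ p ^ a := by
        rw [← pow_mul, ← pow_add]
        have hexp : b - a + a = b := by omega
        rw [hexp, hpow, hpow, ← heq]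
      have h2 : y ^ p ^ (b - a) = y := frob_iter_inj p a h1
      have h3 : y = CF (PowerSeries.constantCoeff (R := Fq) y) :=
        eq_C_of_frob_fixed p (b - a) (by omega) y h2
      have h4 : PowerSeries.constantCoeff (R := Fq) y = ((s : Matrix (Fin n) (Fin n) Fq)).trace := by
        show cc y = _
        rw [hy, ← htrcc, hMred]
      rw [h3, h4]
    obtain ⟨a, b, hab, heq⟩ := Finite.exists_ne_map_eq_of_infinite (fun k : ℕ => s ^ p ^ k)
    rcases hab.lt_or_gt with hlt | hlt
    · exact key _ _ hlt heq
    · exact key _ _ hlt heq.symm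
  -- Step 2 : linear relations among the constant matrices transfer to H
  have hrel : ∀ y : (SpecialLinearGroup (Fin n) Fq) → PowerSeries Fq,
      (∑ s, y s • Cm ↑s) = 0 → (∑ s, y s • Ms s) = 0 := by
    intro y hy
    set A := ∑ s, y s • Ms s with hA
    have htr0 : ∀ t, (A * Ms t).trace = 0 := by
      intro t
      have hL : (A * Ms t).trace
          = ∑ s, y s * CF (((s * t : SpecialLinearGroup (Fin n) Fq) : Matrix (Fin n) (Fin n) Fq)).trace := by
        rw [hA, Finset.sum_mul, Matrix.trace_sum]
        apply Finset.sum_congr rfl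
        intro s _
        rw [smul_mul_assoc, Matrix.trace_smul, ← hMmul, htr, smul_eq_mul]
      have hR : ((∑ s, y s • Cm ↑s) * Cm ↑t).trace
          = ∑ s, y s * CF (((s * t : SpecialLinearGroup (Fin n) Fq) : Matrix (Fin n) (Fin n) Fq)).trace := by
        rw [Finset.sum_mul, Matrix.trace_sum]
        apply Finset.sum_congr rfl
        intro s _
        rw [smul_mul_assoc, Matrix.trace_smul, ← hCmul, htrCm, smul_eq_mul,
          Matrix.SpecialLinearGroup.coe_mul]
      rw [hL, ← hR, hy, zero_mul, Matrix.trace_zero]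
    by_contra hAne
    have hex : ∃ k, ∃ i j, (PowerSeries.coeff (R := Fq) k) (A i j) ≠ 0 := by
      contrapose! hAne
      refine Matrix.ext fun i j => ?_
      rw [Matrix.zero_apply]
      exact PowerSeries.ext fun k => by simpa using hAne k i j
    set k0 := Nat.find hex with hk0def
    obtain ⟨i0, j0, hk0⟩ := Nat.find_spec hex
    have hdvd : ∀ i j, (PowerSeries.X : PowerSeries Fq) ^ k0 ∣ A i j := by
      intro i j
      rw [PowerSeries.X_pow_dvd_iff]
      intro m hm
      have := Nat.find_min hex hm
      push_neg at this
      exact this i j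
    set A' : Matrix (Fin n) (Fin n) (PowerSeries Fq) :=
      Matrix.of (fun i j => (hdvd i j).choose) with hA'def
    have hA'spec : ∀ i j, A i j = PowerSeries.X ^ k0 * A' i j := fun i j => (hdvd i j).choose_spec
    have hAsmul : A = (PowerSeries.X ^ k0 : PowerSeries Fq) • A' := by
      refine Matrix.ext fun i j => ?_
      rw [Matrix.smul_apply, smul_eq_mul]
      exact hA'spec i j
    have htr0' : ∀ t, (A' * Ms t).trace = 0 := by
      intro t
      have h1 : (A * Ms t).trace = (PowerSeries.X ^ k0 : PowerSeries Fq) * (A' * Ms t).trace := by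
        rw [hAsmul, smul_mul_assoc, Matrix.trace_smul, smul_eq_mul]
      have h2 := htr0 t
      rw [h1] at h2
      rcases mul_eq_zero.mp h2 with h3 | h3
      · exact absurd h3 (pow_ne_zero _ PowerSeries.X_ne_zero)
      · exact h3
    set B0 : Matrix (Fin n) (Fin n) Fq := A'.map cc with hB0def
    have hB0 : ∀ t : Matrix.SpecialLinearGroup (Fin n) Fq,
        (B0 * (t : Matrix (Fin n) (Fin n) Fq)).trace = 0 := by
      intro t
      have h1 := congrArg cc (htr0' t)
      rw [← htrcc] at h1
      rw [Matrix.map_mul] at h1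
      rw [hMred] at h1
      simpa using h1
    have hB0span : ∀ m : Matrix (Fin n) (Fin n) Fq, (B0 * m).trace = 0 := by
      intro m
      have hm : m ∈ Submodule.span Fq (Set.range
          (fun s : Matrix.SpecialLinearGroup (Fin n) Fq => (s : Matrix (Fin n) (Fin n) Fq))) := by
        rw [span_SL Fq n (by omega)]; trivial
      induction hm using Submodule.span_induction with
      | mem x hx => obtain ⟨t, rfl⟩ := hx; exact hB0 t
      | zero => simp
      | add x y _ _ hx hy => rw [mul_add, Matrix.trace_add, hx, hy, add_zero]
      | smul c x _ hx => rw [mul_smul_comm, Matrix.trace_smul, hx, smul_zero]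
    have hB00 : B0 = 0 := by
      refine Matrix.ext fun i j => ?_
      have h5 := hB0span (Matrix.single j i 1)
      have h6 : (B0 * Matrix.single j i (1:Fq)).trace = B0 i j := by
        rw [Matrix.trace]
        simp only [Matrix.diag, Matrix.mul_apply, Matrix.single, Matrix.of_apply,
          mul_ite, mul_one, mul_zero]
        rw [Finset.sum_comm]
        simp [ite_and, Finset.sum_ite_eq]
      rw [h6] at h5
      simpa using h5
    have : cc (A' i0 j0) ≠ 0 := by
      intro hcontr
      apply hk0
      rw [hA'spec i0 j0]
      have : (PowerSeries.coeff (R := Fq) k0) (PowerSeries.X ^ k0 * A' i0 j0)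
          = (PowerSeries.coeff (R := Fq) 0) (A' i0 j0) := by
        have := PowerSeries.coeff_X_pow_mul (A' i0 j0) k0 0
        rw [zero_add] at this
        exact this
      rw [this]
      simpa using hcontr
    apply this
    have : B0 i0 j0 = 0 := by rw [hB00]; rfl
    rw [hB0def] at this
    simpa [Matrix.map_apply] using this
  -- choose preimages of the elementary matrices E(l,0)
  have hmemtop : ∀ mm : Matrix (Fin n) (Fin n) Fq, ∃ x : Matrix.SpecialLinearGroup (Fin n) Fq → Fq,
      (∑ s, x s • (s : Matrix (Fin n) (Fin n) Fq)) = mm := by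
    intro mm
    have hmm : mm ∈ Submodule.span Fq (Set.range
        (fun s : Matrix.SpecialLinearGroup (Fin n) Fq => (s : Matrix (Fin n) (Fin n) Fq))) := by
      rw [span_SL Fq n (by omega)]; trivial
    rw [Submodule.mem_span_range_iff_exists_fun] at hmm
    exact hmm
  choose xs hxs using fun l : Fin n => hmemtop (Matrix.single l (0 : Fin n) 1)
  set UU : (Matrix.SpecialLinearGroup (Fin n) Fq → Fq) → Matrix (Fin n) (Fin n) (PowerSeries Fq) :=
    fun x => ∑ s, CF (x s) • Ms s with hUUdef
  have hUUred : ∀ x, (UU x).map cc = ∑ s, x s • (↑s : Matrix (Fin n) (Fin n) Fq) := by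
    intro x
    refine Matrix.ext fun i j => ?_
    rw [Matrix.map_apply, hUUdef]
    simp only [Matrix.sum_apply, Matrix.smul_apply, smul_eq_mul, _root_.map_sum, _root_.map_mul]
    apply Finset.sum_congr rfl
    intro s _
    have h1 : cc (CF (x s)) = x s := PowerSeries.constantCoeff_C _
    have h2 : cc ((Ms s) i j) = (s : Matrix (Fin n) (Fin n) Fq) i j := by
      have := congrArg (fun M => M i j) (hMred s)
      simpa [Matrix.map_apply] using this
    rw [h1, h2]
  have hCC : ∀ x : Matrix.SpecialLinearGroup (Fin n) Fq → Fq,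
      (∑ s, CF (x s) • Cm ↑s) = Cm (∑ s, x s • (↑s : Matrix (Fin n) (Fin n) Fq)) := by
    intro x
    refine Matrix.ext fun i j => ?_
    simp only [hCmdef, Matrix.sum_apply, Matrix.smul_apply, Matrix.map_apply, smul_eq_mul,
      _root_.map_sum, _root_.map_mul]
  -- the conjugating matrix B
  set B : Matrix (Fin n) (Fin n) (PowerSeries Fq) :=
    Matrix.of (fun k l => (UU (xs l)) k (0 : Fin n)) with hBdef
  -- intertwining property
  have hcol : ∀ s l, Ms s * UU (xs l)
      = ∑ m, CF ((s : Matrix (Fin n) (Fin n) Fq) m l) • UU (xs m) := by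
    intro s l
    have hL1 : Ms s * UU (xs l) = ∑ t, CF (xs l (s⁻¹ * t)) • Ms t := by
      calc Ms s * UU (xs l) = ∑ t, CF (xs l t) • Ms (s * t) := by
            rw [hUUdef, Finset.mul_sum]
            apply Finset.sum_congr rfl
            intro t _
            rw [mul_smul_comm, hMmul]
        _ = ∑ t, CF (xs l (s⁻¹ * t)) • Ms t := by
            apply Fintype.sum_equiv (Equiv.mulLeft s)
            intro t
            simp
    have hR1 : (∑ m, CF ((s : Matrix (Fin n) (Fin n) Fq) m l) • UU (xs m))
        = ∑ t, (∑ m, CF ((s : Matrix (Fin n) (Fin n) Fq) m l) * CF (xs m t)) • Ms t := by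
      rw [hUUdef]
      simp only [Finset.smul_sum, smul_smul]
      rw [Finset.sum_comm]
      apply Finset.sum_congr rfl
      intro t _
      rw [Finset.sum_smul]
    rw [hL1, hR1]
    -- reduce to a relation via hrel
    have hsub : ∀ (u v : Matrix.SpecialLinearGroup (Fin n) Fq → PowerSeries Fq),
        ((∑ t, (u t - v t) • Cm ↑t) = 0) → (∑ t, u t • Ms t) = ∑ t, v t • Ms t := by
      intro u v huv
      have := hrel _ huv
      rw [← sub_eq_zero]
      rw [← Finset.sum_sub_distrib]
      simp only [← sub_smul]
      exact this
    apply hsub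
    -- show the relation holds among constants
    have hC1 : (∑ t, CF (xs l (s⁻¹ * t)) • Cm ↑t)
        = Cm ((s : Matrix (Fin n) (Fin n) Fq) * Matrix.single l (0 : Fin n) 1) := by
      have h1 : (∑ t, CF (xs l t) • Cm ↑(s * t)) = ∑ t, CF (xs l (s⁻¹ * t)) • Cm ↑t := by
        apply Fintype.sum_equiv (Equiv.mulLeft s)
        intro t
        simp
      rw [← h1]
      have h2 : (∑ t, CF (xs l t) • Cm ↑(s * t)) = Cm ↑s * (∑ t, CF (xs l t) • Cm ↑t) := by
        rw [Finset.mul_sum]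
        apply Finset.sum_congr rfl
        intro t _
        rw [mul_smul_comm, Matrix.SpecialLinearGroup.coe_mul, hCmul]
      rw [h2, hCC, hxs, ← hCmul]
    have hC2 : (∑ t, (∑ m, CF ((s : Matrix (Fin n) (Fin n) Fq) m l) * CF (xs m t)) • Cm ↑t)
        = Cm (∑ m, (s : Matrix (Fin n) (Fin n) Fq) m l • Matrix.single m (0 : Fin n) 1) := by
      have h1 : (∑ t, (∑ m, CF ((s : Matrix (Fin n) (Fin n) Fq) m l) * CF (xs m t)) • Cm ↑t)
          = ∑ m, CF ((s : Matrix (Fin n) (Fin n) Fq) m l) • (∑ t, CF (xs m t) • Cm ↑t) := by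
        simp only [Finset.smul_sum, smul_smul]
        rw [Finset.sum_comm]
        apply Finset.sum_congr rfl
        intro t _
        rw [Finset.sum_smul]
      rw [h1]
      have h2 : ∀ m, CF ((s : Matrix (Fin n) (Fin n) Fq) m l) • (∑ t, CF (xs m t) • Cm ↑t)
          = Cm ((s : Matrix (Fin n) (Fin n) Fq) m l • Matrix.single m (0 : Fin n) 1) := by
        intro m
        rw [hCC, hxs]
        refine Matrix.ext fun i j => ?_
        simp only [hCmdef, Matrix.map_apply, Matrix.smul_apply, smul_eq_mul, ← _root_.map_mul]
      rw [Finset.sum_congr rfl (fun m _ => h2 m)]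
      refine Matrix.ext fun i j => ?_
      simp only [hCmdef, Matrix.map_apply, Matrix.sum_apply, _root_.map_sum]
    have hcomb : (s : Matrix (Fin n) (Fin n) Fq) * Matrix.single l (0 : Fin n) 1
        = ∑ m, (s : Matrix (Fin n) (Fin n) Fq) m l • Matrix.single m (0 : Fin n) 1 := by
      ext a b
      simp only [Matrix.mul_apply, Matrix.sum_apply, Matrix.smul_apply, Matrix.single,
        Matrix.of_apply, smul_eq_mul, mul_ite, mul_one, mul_zero]
      by_cases hb : (0 : Fin n) = b
      · subst hb
        simp
      · simp [hb]
    simp only [sub_smul]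
    rw [Finset.sum_sub_distrib, hC1, hC2, hcomb, sub_self]
  -- intertwining at the matrix level
  have hint : ∀ s, Ms s * B = B * Cm ↑s := by
    intro s
    refine Matrix.ext fun k l => ?_
    have hL : (Ms s * B) k l = (Ms s * UU (xs l)) k (0 : Fin n) := by
      rw [Matrix.mul_apply, Matrix.mul_apply]
      apply Finset.sum_congr rfl
      intro m _
      simp only [hBdef, Matrix.of_apply]
    have hR : (B * Cm ↑s) k l
        = (∑ m, CF ((s : Matrix (Fin n) (Fin n) Fq) m l) • UU (xs m)) k (0 : Fin n) := by
      rw [Matrix.mul_apply, Matrix.sum_apply]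
      apply Finset.sum_congr rfl
      intro m _
      rw [Matrix.smul_apply, smul_eq_mul]
      show (UU (xs m)) k 0 * (Cm ↑s) m l = _
      have h1 : (Cm ((s : Matrix (Fin n) (Fin n) Fq))) m l
          = CF ((s : Matrix (Fin n) (Fin n) Fq) m l) := rfl
      rw [h1, mul_comm]
    rw [hL, hR, hcol s l]
  -- the reduction of B is the identity matrix
  have hBred : B.map cc = 1 := by
    refine Matrix.ext fun k l => ?_
    rw [Matrix.map_apply]
    have h2 := congrArg (fun M => M k (0 : Fin n)) (hUUred (xs l))
    simp only [Matrix.map_apply] at h2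
    have h3 : cc (B k l) = (∑ s, xs l s • ((s : Matrix (Fin n) (Fin n) Fq))) k (0 : Fin n) := h2
    rw [h3, hxs l]
    by_cases hkl : k = l
    · subst hkl; simp [Matrix.single, Matrix.one_apply]
    · simp [Matrix.single, Matrix.one_apply, hkl, Ne.symm hkl]
  -- B is invertible
  have hdet : IsUnit B.det := by
    have h1 : cc B.det = 1 := by
      rw [RingHom.map_det]
      rw [RingHom.mapMatrix_apply]
      rw [hBred, Matrix.det_one]
    rw [PowerSeries.isUnit_iff_constantCoeff]
    rw [h1]
    exact isUnit_one
  have hBunit : IsUnit B := (Matrix.isUnit_iff_isUnit_det B).mpr hdet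
  set u := hBunit.unit with hudef
  have hu : (u : Matrix (Fin n) (Fin n) (PowerSeries Fq)) = B := hBunit.unit_spec
  refine ⟨u⁻¹, ?_⟩
  have hconjmat : ∀ s, ((u⁻¹ : (Matrix (Fin n) (Fin n) (PowerSeries Fq))ˣ) : Matrix (Fin n) (Fin n) (PowerSeries Fq))
      * Ms s * ((u⁻¹⁻¹ : (Matrix (Fin n) (Fin n) (PowerSeries Fq))ˣ) : Matrix (Fin n) (Fin n) (PowerSeries Fq))
      = Cm ↑s := by
    intro s
    rw [inv_inv, hu]
    calc (↑u⁻¹ : Matrix (Fin n) (Fin n) (PowerSeries Fq)) * Ms s * B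
        = ↑u⁻¹ * (Ms s * B) := by rw [mul_assoc]
      _ = ↑u⁻¹ * (B * Cm ↑s) := by rw [hint s]
      _ = (↑u⁻¹ * B) * Cm ↑s := by rw [mul_assoc]
      _ = Cm ↑s := by rw [← hu, Units.inv_mul, one_mul]
  ext x
  simp only [Set.mem_setOf_eq, SetLike.mem_coe]
  constructor
  · rintro ⟨h, hh, hx⟩
    obtain ⟨s, hs⟩ := hHσ h hh
    rw [← hs] at hx
    have hxs2 : (x : Matrix (Fin n) (Fin n) (PowerSeries Fq)) = Cm ↑s := by
      rw [hx]
      exact hconjmat s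
    rw [SLconst, MonoidHom.mem_range]
    refine ⟨s, ?_⟩
    refine Subtype.coe_injective ?_
    show ((SpecialLinearGroup.map (n := Fin n) (PowerSeries.C (R := Fq)) s :
        SpecialLinearGroup (Fin n) (PowerSeries Fq)) : Matrix (Fin n) (Fin n) (PowerSeries Fq))
        = (x : Matrix (Fin n) (Fin n) (PowerSeries Fq))
    rw [hxs2]
    rfl
  · intro hx
    rw [SLconst, MonoidHom.mem_range] at hx
    obtain ⟨s, hs⟩ := hx
    refine ⟨↑(σ s), hσH s, ?_⟩
    rw [← hs]
    show ((SpecialLinearGroup.map (n := Fin n) (PowerSeries.C (R := Fq)) s : SpecialLinearGroup (Fin n) (PowerSeries Fq)) : Matrix (Fin n) (Fin n) (PowerSeries Fq)) = _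
    have h1 : ((SpecialLinearGroup.map (n := Fin n) (PowerSeries.C (R := Fq)) s : SpecialLinearGroup (Fin n) (PowerSeries Fq)) : Matrix (Fin n) (Fin n) (PowerSeries Fq)) = Cm ↑s := rfl
    rw [h1, ← hconjmat s]
end
end

section
/- Let q > 5 be a prime power and n ≥ 2. Let T = {t ∈ (𝔽_q^×)^n : t_1·t_2⋯t_n = 1} (the 𝔽_q-points of the diagonal torus of SL_n). For each t ∈ T define the vector v_t ∈ 𝔽_q^{S}, indexed by S = {∗} ⊔ {(i,j) : 1 ≤ i, j ≤ n, i ≠ j}, by v_t(∗) = 1 and v_t(i,j) = t_i · t_j^{−1}. Then the 𝔽_q-linear span of {v_t : t ∈ T} is all of 𝔽_q^{S}. (This is the root-values spanning lemma, in its type A_{n-1} instance, where the roots of SL_n relative to the diagonal torus are t ↦ t_i t_j^{−1} for i ≠ j.) -/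
/-!
STATEMENT 10: For q > 5 and n ≥ 2, the vectors v_t (t in the diagonal torus of SL_n(𝔽_q)),
with v_t(∗) = 1 and v_t(i,j) = t_i·t_j⁻¹ for i ≠ j, span all of 𝔽_q^S where
S = {∗} ⊔ {(i,j) : i ≠ j}.
-/

theorem root_values_span_top
    (q n : ℕ) (hq : 5 < q) (hn : 2 ≤ n)
    (Fq : Type) [Field Fq] [Fintype Fq] (hcard : Fintype.card Fq = q) :
    Submodule.span Fq
      {v : Option {p : Fin n × Fin n // p.1 ≠ p.2} → Fq |
        ∃ t : Fin n → Fqˣ, (∏ i, t i) = 1 ∧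
          v = fun s => Option.elim s 1 (fun p => (t p.1.1 : Fq) * ((t p.1.2 : Fq))⁻¹)} = ⊤ := by
  classical
  set P := {p : Fin n × Fin n // p.1 ≠ p.2} with hP
  by_contra hne
  -- the torus as a submonoid
  set Tm : Submonoid (Fin n → Fqˣ) :=
    { carrier := {t | ∏ i, t i = 1}
      mul_mem' := by
        intro a b ha hb
        simp only [Set.mem_setOf_eq] at *
        simp [Finset.prod_mul_distrib, ha, hb]
      one_mem' := by simp } with hTm
  -- the characters
  set χ : Option P → (Tm →* Fq) := fun s =>
    Option.elim s 1 fun p =>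
      ((Units.coeHom Fq).comp
        ((Pi.evalMonoidHom (fun _ : Fin n => Fqˣ) p.1.1 /
          Pi.evalMonoidHom (fun _ : Fin n => Fqˣ) p.1.2).comp Tm.subtype)) with hχ
  have hχ_some : ∀ (p : P) (t : Tm), χ (some p) t = ((t.1 p.1.1 / t.1 p.1.2 : Fqˣ) : Fq) := by
    intro p t; rfl
  -- a generator of Fqˣ
  obtain ⟨g, hg⟩ := IsCyclic.exists_generator (α := Fqˣ)
  have horder : orderOf g = q - 1 := by
    rw [orderOf_eq_card_of_forall_mem_zpowers hg, Nat.card_eq_fintype_card,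
      Fintype.card_units, hcard]
  -- the exponent vectors
  set e : Option P → Fin n → ℤ := fun s r =>
    Option.elim s 0 (fun p => (if p.1.1 = r then (1:ℤ) else 0) - (if p.1.2 = r then 1 else 0)) with he
  have he_bound : ∀ s r, -1 ≤ e s r ∧ e s r ≤ 1 := by
    rintro (_ | p) r
    · simp [he]
    · simp only [he, Option.elim]
      split_ifs <;> omega
  have he_sum : ∀ s, ∑ r, e s r = 0 := by
    rintro (_ | p)
    · simp [he]
    · simp [he, Finset.sum_sub_distrib, Finset.sum_ite_eq]
  have he_inj : Function.Injective e := by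
    rintro (_ | p) (_ | p') h
    · rfl
    · have := congrFun h p'.1.1
      simp [he, p'.2.symm] at this
    · have := congrFun h p.1.1
      simp [he, p.2.symm] at this
    · have h1 := congrFun h p'.1.1
      have h2 := congrFun h p'.1.2
      have h3 := congrFun h p.1.1
      have h4 := congrFun h p.1.2
      simp only [he, Option.elim] at h1 h2 h3 h4
      have hA : p.1.1 = p'.1.1 := by
        by_contra hA
        rw [if_neg hA, if_pos trivial, if_neg (show ¬ p'.1.2 = p'.1.1 from fun hh => p'.2 hh.symm)]
          at h1
        split_ifs at h1 <;> omega
      have hB : p.1.2 = p'.1.2 := by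
        by_contra hB
        rw [if_neg hB, if_neg p'.2, if_pos trivial] at h2
        split_ifs at h2 <;> omega
      exact congrArg some (Subtype.ext (Prod.ext hA hB))
  -- key: distinct indices give distinct characters
  have hχ_inj : Function.Injective χ := by
    intro s s' hss
    by_contra hne'
    have hd : e s ≠ e s' := fun h => hne' (he_inj h)
    obtain ⟨k, hk⟩ : ∃ k, e s k - e s' k ≠ 0 := by
      by_contra hall
      push_neg at hall
      exact hd (funext fun r => by have := hall r; omega)
    obtain ⟨l, hl⟩ : ∃ l, e s l - e s' l ≠ e s k - e s' k := by
      by_contra hall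
      push_neg at hall
      have hsum : ∑ r, (e s r - e s' r) = 0 := by
        rw [Finset.sum_sub_distrib, he_sum, he_sum, sub_zero]
      rw [Finset.sum_congr rfl (fun r _ => hall r)] at hsum
      simp only [Finset.sum_const, Finset.card_univ, Fintype.card_fin, nsmul_eq_mul] at hsum
      have : (n : ℤ) ≠ 0 := by positivity
      rcases mul_eq_zero.1 hsum with h | h
      · omega
      · exact hk h
    have hkl : k ≠ l := fun h => hl (by rw [h])
    -- the witness torus element
    set c : Fin n → ℤ := fun r => (if r = k then (1:ℤ) else 0) - (if r = l then 1 else 0) with hc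
    set t : Fin n → Fqˣ := fun r => g ^ c r with ht
    have htT : t ∈ Tm := by
      show ∏ r, t r = 1
      have : ∀ r, t r = (if r = k then g else 1) * (if r = l then g⁻¹ else 1) := by
        intro r
        simp only [ht, hc]
        split_ifs with h1 h2 h2
        · exact absurd (h1 ▸ h2) hkl
        · simp
        · simp
        · simp
      rw [Finset.prod_congr rfl fun r _ => this r, Finset.prod_mul_distrib]
      simp [Finset.prod_ite_eq']
    have hval : ∀ s₀, χ s₀ ⟨t, htT⟩ = ((g ^ (e s₀ k - e s₀ l) : Fqˣ) : Fq) := by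
      rintro (_ | p)
      · simp [hχ, he]
      · rw [hχ_some]
        have h5 : t p.1.1 / t p.1.2 = g ^ (c p.1.1 - c p.1.2) := by
          rw [zpow_sub]; rfl
        rw [h5]
        congr 1
        simp only [he, hc, Option.elim]
        ring
    have h1 := hval s
    have h2 := hval s'
    rw [hss] at h1
    rw [h1] at h2
    have : g ^ (e s k - e s l) = g ^ (e s' k - e s' l) := Units.ext h2
    have hzero : g ^ ((e s k - e s l) - (e s' k - e s' l)) = 1 := by
      rw [zpow_sub]; exact div_eq_one.2 this
    rw [← orderOf_dvd_iff_zpow_eq_one, horder] at hzero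
    have hb1 := he_bound s k
    have hb2 := he_bound s l
    have hb3 := he_bound s' k
    have hb4 := he_bound s' l
    have hne0 : (e s k - e s l) - (e s' k - e s' l) ≠ 0 := by omega
    have hle : ((q - 1 : ℕ) : ℤ) ≤ |(e s k - e s l) - (e s' k - e s' l)| :=
      Int.le_of_dvd (abs_pos.2 hne0) ((dvd_abs _ _).2 hzero)
    have habs : |(e s k - e s l) - (e s' k - e s' l)| ≤ 4 :=
      abs_le.2 ⟨by omega, by omega⟩
    omega
  -- now the dual argument
  obtain ⟨φ, hφne, hφ⟩ := Submodule.exists_dual_map_eq_bot_of_lt_top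
    (lt_top_iff_ne_top.2 hne) inferInstance
  set a : Option P → Fq := fun s => φ (fun j => if s = j then 1 else 0) with ha
  have hsum0 : ∀ t : Tm, ∑ s, a s * χ s t = 0 := by
    intro t
    have hvmem : (fun s => Option.elim s 1 fun p => (t.1 p.1.1 : Fq) * ((t.1 p.1.2 : Fq))⁻¹) ∈
        Submodule.span Fq {v : Option P → Fq |
          ∃ t : Fin n → Fqˣ, (∏ i, t i) = 1 ∧
            v = fun s => Option.elim s 1 (fun p => (t p.1.1 : Fq) * ((t p.1.2 : Fq))⁻¹)} :=
      Submodule.subset_span ⟨t.1, t.2, rfl⟩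
    have hφ0 : φ (fun s => Option.elim s 1 fun p => (t.1 p.1.1 : Fq) * ((t.1 p.1.2 : Fq))⁻¹) = 0 := by
      have : φ (fun s => Option.elim s 1 fun p => (t.1 p.1.1 : Fq) * ((t.1 p.1.2 : Fq))⁻¹) ∈
          Submodule.map φ (Submodule.span Fq _) := Submodule.mem_map_of_mem hvmem
      rw [hφ] at this
      exact this
    rw [LinearMap.pi_apply_eq_sum_univ] at hφ0
    rw [← hφ0]
    refine Finset.sum_congr rfl fun s _ => ?_
    rcases s with _ | p
    · simp [hχ, mul_comm, smul_eq_mul]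
      rfl
    · rw [hχ_some]
      simp only [Option.elim, smul_eq_mul]
      rw [mul_comm]
      congr 1
      push_cast
      ring
  have hli := (linearIndependent_monoidHom Tm Fq).comp χ hχ_inj
  rw [Fintype.linearIndependent_iff] at hli
  have hazero : ∀ s, a s = 0 := by
    apply hli
    funext t
    simp only [Finset.sum_apply, Pi.smul_apply, Function.comp_apply, smul_eq_mul, Pi.zero_apply]
    exact hsum0 t
  apply hφne
  apply LinearMap.ext
  intro v
  rw [LinearMap.pi_apply_eq_sum_univ]
  simp only [LinearMap.zero_apply]
  exact Finset.sum_eq_zero fun s _ => by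
    rw [show (φ fun j => if s = j then 1 else 0) = 0 from hazero s, smul_zero]
end

section
/- Let q be a prime power, n ≥ 2, 1 ≤ m < n, and F = 𝔽_q((t⁻¹)). Let U(𝔽_q) be the finite subgroup of SL_n(F) consisting of all block matrices fromBlocks(1_m, B, 0, 1_{n−m}) where B ranges over the m×(n−m) matrices with entries in 𝔽_q (constants). If g ∈ SL_n(F) normalizes U(𝔽_q), i.e., g·U(𝔽_q)·g⁻¹ = U(𝔽_q), then the lower-left (n−m)×m block of g is zero, i.e., g lies in the block upper-triangular parabolic subgroup P(F). (This is part (i) of the normalizer lemma for a maximal parabolic with abelian unipotent radical, in its type A_{n-1} instance.) -/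
/-!
STATEMENT 12 (normalizer lemma, part (i), type A): if g ∈ SL_n(F), F = 𝔽_q((t⁻¹)),
normalizes the group U(𝔽_q) of block upper unipotent matrices fromBlocks(1, B, 0, 1)
with B over 𝔽_q, then the lower-left block of g vanishes, i.e. g lies in the block
upper-triangular parabolic P(F). Here n = a + b with a = m ≥ 1, b = n − m ≥ 1.
-/

noncomputable section
open Matrix

variable (Fq : Type) [Field Fq] [Fintype Fq]

/-- `F = 𝔽_q((t⁻¹))`, realized as the field of formal Laurent series over `𝔽_q`
with uniformizer `X = t⁻¹`. -/
abbrev F := LaurentSeries Fq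

/-- `U(𝔽_q)`: the block upper unipotent matrices with constant entries. -/
def Uconst (a b : ℕ) : Set (SpecialLinearGroup (Fin a ⊕ Fin b) (F Fq)) :=
  {u | ∃ B : Matrix (Fin a) (Fin b) Fq,
    (u : Matrix (Fin a ⊕ Fin b) (Fin a ⊕ Fin b) (F Fq)) =
      Matrix.fromBlocks 1 (B.map (HahnSeries.C : Fq →+* F Fq)) 0 1}

theorem normalizer_of_Uconst_subset_parabolic
    (q a b : ℕ) (hq : ∃ p k : ℕ, p.Prime ∧ 0 < k ∧ q = p ^ k)
    (hcard : Fintype.card Fq = q) (ha : 1 ≤ a) (hb : 1 ≤ b)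
    (g : SpecialLinearGroup (Fin a ⊕ Fin b) (F Fq))
    (hg : (fun u : SpecialLinearGroup (Fin a ⊕ Fin b) (F Fq) => g * u * g⁻¹) '' Uconst Fq a b
      = Uconst Fq a b) :
    ∀ (i : Fin b) (j : Fin a),
      (g : Matrix (Fin a ⊕ Fin b) (Fin a ⊕ Fin b) (F Fq)) (Sum.inr i) (Sum.inl j) = 0 := by
  intro i j
  have i₀ : Fin b := ⟨0, hb⟩
  set B : Matrix (Fin a) (Fin b) Fq := Matrix.single j i₀ 1 with hB
  have hdet : (Matrix.fromBlocks 1 (B.map (HahnSeries.C : Fq →+* F Fq)) 0 1 :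
      Matrix (Fin a ⊕ Fin b) (Fin a ⊕ Fin b) (F Fq)).det = 1 := by
    rw [Matrix.det_fromBlocks_zero₂₁]; simp
  set u : SpecialLinearGroup (Fin a ⊕ Fin b) (F Fq) := ⟨_, hdet⟩ with hu_def
  have hu : u ∈ Uconst Fq a b := ⟨B, rfl⟩
  have hmem : g * u * g⁻¹ ∈ Uconst Fq a b := by
    rw [← hg]; exact ⟨u, hu, rfl⟩
  obtain ⟨B', hB'⟩ := hmem
  have hgu : g * u = (g * u * g⁻¹) * g := by group
  have hmat : (g : Matrix (Fin a ⊕ Fin b) (Fin a ⊕ Fin b) (F Fq)) * (u : Matrix _ _ _)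
      = Matrix.fromBlocks 1 (B'.map (HahnSeries.C : Fq →+* F Fq)) 0 1
        * (g : Matrix (Fin a ⊕ Fin b) (Fin a ⊕ Fin b) (F Fq)) := by
    have h2 : ((g * u : SpecialLinearGroup (Fin a ⊕ Fin b) (F Fq)) :
        Matrix (Fin a ⊕ Fin b) (Fin a ⊕ Fin b) (F Fq)) = (g : Matrix _ _ _) * (u : Matrix _ _ _) := rfl
    have h1 : (((g * u * g⁻¹) * g : SpecialLinearGroup (Fin a ⊕ Fin b) (F Fq)) :
        Matrix (Fin a ⊕ Fin b) (Fin a ⊕ Fin b) (F Fq))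
        = ((g * u * g⁻¹ : SpecialLinearGroup (Fin a ⊕ Fin b) (F Fq)) : Matrix _ _ _) * (g : Matrix _ _ _) := rfl
    rw [← h2, hgu, h1, hB']
  have hentry := congrFun (congrFun hmat (Sum.inr i)) (Sum.inr i₀)
  simp [Matrix.mul_apply, Fintype.sum_sum_type, hu_def, hB,
    Matrix.single, Matrix.one_apply, Finset.sum_ite_eq,
    Finset.sum_ite_eq'] at hentry
  exact hentry
end
end

section
/- Let q be a prime power, n ≥ 2, 1 ≤ m < n, F = 𝔽_q((t⁻¹)) and O = 𝔽_q[[t⁻¹]] its valuation ring. Let U(𝔽_q) be the finite subgroup of SL_n(F) of all block matrices fromBlocks(1_m, B, 0, 1_{n−m}) with B an m×(n−m) matrix over 𝔽_q. If g ∈ SL_n(F) is block diagonal of the form fromBlocks(A, 0, 0, D) with all entries of A and D in O, and g normalizes U(𝔽_q), then every entry of g lies in 𝔽_q (the constants); that is, the normalizer of U(𝔽_q) in SL_n(F) meets the Levi subgroup L(O) exactly in L(𝔽_q). (This is part (ii) of the normalizer lemma, in its type A_{n-1} instance.) -/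
/-!
STATEMENT 13 (normalizer lemma, part (ii), type A): if g ∈ SL_n(F), F = 𝔽_q((t⁻¹)),
is block diagonal fromBlocks(A, 0, 0, D) with entries in O = 𝔽_q[[t⁻¹]] and normalizes
U(𝔽_q), then every entry of g is a constant (lies in 𝔽_q); i.e. the normalizer of
U(𝔽_q) meets L(O) exactly in L(𝔽_q).
-/

noncomputable section
open Matrix

variable (Fq : Type) [Field Fq] [Fintype Fq]

/-- The inclusion `O = 𝔽_q[[X]] → F`. -/
def ofPS : PowerSeries Fq →+* F Fq := HahnSeries.ofPowerSeries ℤ Fq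

variable {K : Type} [Field K]

lemma ps_order_pow_gt {h1 : PowerSeries K} {e j : ℕ} (he : (e : ℕ∞) ≤ h1.order)
    (he1 : 1 ≤ e) (hj : 2 ≤ j) : (e : ℕ∞) < (h1 ^ j).order := by
  obtain ⟨j, rfl⟩ := Nat.exists_eq_add_of_le hj
  have h2 : h1 ^ (2 + j) = h1 * (h1 * h1 ^ j) := by ring
  have hle : h1.order + (h1 * h1 ^ j).order ≤ (h1 ^ (2 + j)).order := by
    rw [h2]; exact PowerSeries.le_order_mul _ _
  have hle2 : h1.order + h1.order ≤ h1.order + (h1 * h1 ^ j).order := by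
    gcongr
    calc h1.order = h1.order + 0 := by simp
    _ ≤ h1.order + (h1 ^ j).order := by gcongr; exact zero_le
    _ ≤ (h1 * h1 ^ j).order := PowerSeries.le_order_mul _ _
  refine lt_of_lt_of_le ?_ (le_trans hle2 hle)
  calc (e : ℕ∞) < ((e + e : ℕ) : ℕ∞) := by exact_mod_cast (by omega : e < e + e)
  _ = (e : ℕ∞) + (e : ℕ∞) := by push_cast; ring
  _ ≤ h1.order + h1.order := by gcongr

lemma ps_pow_char (p : ℕ) [Fact p.Prime] [CharP K p]
    (f : PowerSeries K) (μ : K) (h : f ^ p = PowerSeries.C (R := K) μ) :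
    ∃ ρ : K, f = PowerSeries.C (R := K) ρ := by
  haveI : CharP (PowerSeries K) p :=
    charP_of_injective_ringHom (PowerSeries.C_injective (R := K)) p
  set f0 := PowerSeries.constantCoeff (R := K) f with hf0
  set h1 := f - PowerSeries.C (R := K) f0 with hh1
  have hc0 : PowerSeries.constantCoeff (R := K) h1 = 0 := by simp [hh1, hf0]
  have hfe : f = PowerSeries.C (R := K) f0 + h1 := by rw [hh1]; ring
  have hap : f ^ p = (PowerSeries.C (R := K) f0) ^ p + h1 ^ p := by
    rw [hfe]; exact add_pow_char _ _ _
  have hpow : h1 ^ p = PowerSeries.C (R := K) (μ - f0 ^ p) := by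
    rw [map_sub, ← h, hap, map_pow]; ring
  have hcc : PowerSeries.constantCoeff (R := K) (h1 ^ p) = 0 := by
    rw [map_pow, hc0, zero_pow (Fact.out : p.Prime).ne_zero]
  rw [hpow, PowerSeries.constantCoeff_C] at hcc
  rw [hcc, map_zero] at hpow
  have h10 : h1 = 0 := pow_eq_zero_iff (Fact.out : p.Prime).ne_zero |>.mp hpow
  exact ⟨f0, by rw [hfe, h10, add_zero]⟩

lemma ps_pow_eq_C (p : ℕ) [Fact p.Prime] [CharP K p] :
    ∀ n : ℕ, 0 < n → ∀ f : PowerSeries K, ∀ μ : K, f ^ n = PowerSeries.C (R := K) μ →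
      ∃ ρ : K, f = PowerSeries.C (R := K) ρ := by
  intro n
  induction n using Nat.strong_induction_on with
  | _ n IH =>
    intro hn f μ hf
    have hp2 : 2 ≤ p := (Fact.out : p.Prime).two_le
    by_cases hμ : μ = 0
    · subst hμ
      rw [map_zero] at hf
      exact ⟨0, by rw [pow_eq_zero_iff hn.ne' |>.mp hf, map_zero]⟩
    by_cases hdvd : p ∣ n
    · obtain ⟨m, rfl⟩ := hdvd
      have hm : 0 < m := Nat.pos_of_ne_zero fun h => by simp [h] at hn
      have hfm : (f ^ m) ^ p = PowerSeries.C (R := K) μ := by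
        rw [← pow_mul, mul_comm]; exact hf
      obtain ⟨ν, hν⟩ := ps_pow_char p (f ^ m) μ hfm
      exact IH m (by nlinarith) hm f ν hν
    · -- p ∤ n
      set f0 := PowerSeries.constantCoeff (R := K) f with hf0
      set h1 := f - PowerSeries.C (R := K) f0 with hh1
      have hc0 : PowerSeries.constantCoeff (R := K) h1 = 0 := by simp [hh1, hf0]
      have hfe : f = PowerSeries.C (R := K) f0 + h1 := by rw [hh1]; ring
      by_cases h10 : h1 = 0
      · exact ⟨f0, by rw [hfe, h10, add_zero]⟩
      exfalso
      have hof : h1.order ≠ ⊤ := by simpa using h10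
      obtain ⟨e, he⟩ := WithTop.ne_top_iff_exists.mp hof
      have hoe := PowerSeries.order_eq_nat.mp he.symm
      have hce : PowerSeries.coeff (R := K) e h1 ≠ 0 := hoe.1
      have he1 : 1 ≤ e := by
        by_contra hcon
        have he0 : e = 0 := by omega
        subst he0
        rw [PowerSeries.coeff_zero_eq_constantCoeff, hc0] at hce
        exact hce rfl
      have hf00 : f0 ≠ 0 := by
        intro h0
        have hcc : PowerSeries.constantCoeff (R := K) (f ^ n) = μ := by
          rw [hf, PowerSeries.constantCoeff_C]
        rw [map_pow, ← hf0, h0, zero_pow hn.ne'] at hcc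
        exact hμ hcc.symm
      have key : ∀ (k c j : ℕ),
          PowerSeries.coeff (R := K) e (PowerSeries.C (R := K) f0 ^ k * h1 ^ j * (c : PowerSeries K))
            = f0 ^ k * (c : K) * PowerSeries.coeff (R := K) e (h1 ^ j) := by
        intro k c j
        rw [← map_natCast (PowerSeries.C (R := K)) c, ← map_pow, mul_right_comm, ← _root_.map_mul,
          PowerSeries.coeff_C_mul]
      have hexp : (PowerSeries.C (R := K) f0 + h1) ^ n
          = ∑ k ∈ Finset.range (n + 1),
            PowerSeries.C (R := K) f0 ^ k * h1 ^ (n - k) * (n.choose k : PowerSeries K) :=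
        add_pow _ _ n
      have hco : PowerSeries.coeff (R := K) e ((PowerSeries.C (R := K) f0 + h1) ^ n) = 0 := by
        rw [← hfe, hf, PowerSeries.coeff_C, if_neg (by omega)]
      rw [hexp, map_sum] at hco
      rw [Finset.sum_eq_single (n - 1)] at hco
      · have h1le : n - (n - 1) = 1 := by omega
        have hch : n.choose (n - 1) = n := by
          rw [Nat.choose_symm (by omega : 1 ≤ n), Nat.choose_one_right]
        rw [h1le, hch, key, pow_one] at hco
        rcases mul_eq_zero.mp hco with h' | h'
        · rcases mul_eq_zero.mp h' with h'' | h''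
          · exact pow_ne_zero _ hf00 h''
          · exact (CharP.cast_eq_zero_iff K p n).not.mpr hdvd h''
        · exact hce h'
      · intro k hk hkn
        have hk' : k ≤ n := Nat.lt_succ_iff.mp (Finset.mem_range.mp hk)
        rw [key]
        rcases Nat.lt_or_ge k n with hlt | hge
        · have h2 : 2 ≤ n - k := by omega
          rw [PowerSeries.coeff_of_lt_order _ (ps_order_pow_gt (le_of_eq he) he1 h2)]
          ring
        · have hkn' : k = n := by omega
          subst hkn'
          rw [Nat.sub_self, pow_zero, PowerSeries.coeff_one, if_neg (by omega)]
          ring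
      · intro hmem
        exact absurd (Finset.mem_range.mpr (by omega)) hmem

lemma det_map_ringHom {R S : Type*} [CommRing R] [CommRing S] {n : Type*} [DecidableEq n]
    [Fintype n] (f : R →+* S) (M : Matrix n n R) : (M.map f).det = f M.det := by
  rw [← RingHom.mapMatrix_apply, ← RingHom.map_det]

theorem normalizer_inter_Levi_integral_eq_const
    (q a b : ℕ) (hq : ∃ p k : ℕ, p.Prime ∧ 0 < k ∧ q = p ^ k)
    (hcard : Fintype.card Fq = q) (ha : 1 ≤ a) (hb : 1 ≤ b)
    (g : SpecialLinearGroup (Fin a ⊕ Fin b) (F Fq))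
    (A : Matrix (Fin a) (Fin a) (F Fq)) (D : Matrix (Fin b) (Fin b) (F Fq))
    (hA : ∀ i j, A i j ∈ Set.range (ofPS Fq))
    (hD : ∀ i j, D i j ∈ Set.range (ofPS Fq))
    (hgAD : (g : Matrix (Fin a ⊕ Fin b) (Fin a ⊕ Fin b) (F Fq)) = Matrix.fromBlocks A 0 0 D)
    (hg : (fun u : SpecialLinearGroup (Fin a ⊕ Fin b) (F Fq) => g * u * g⁻¹) '' Uconst Fq a b
      = Uconst Fq a b) :
    ∀ i j, (g : Matrix (Fin a ⊕ Fin b) (Fin a ⊕ Fin b) (F Fq)) i j ∈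
      Set.range ((HahnSeries.C : Fq →+* F Fq)) := by
  haveI : Nonempty (Fin a) := ⟨⟨0, ha⟩⟩
  haveI : Nonempty (Fin b) := ⟨⟨0, hb⟩⟩
  set C : Fq →+* F Fq := (HahnSeries.C : Fq →+* F Fq) with hC
  -- determinants
  have hdet1 : A.det * D.det = 1 := by
    have := g.prop
    rw [hgAD] at this
    rwa [Matrix.det_fromBlocks_zero₂₁] at this
  have hAdet : IsUnit A.det := IsUnit.of_mul_eq_one _ hdet1
  have hDdet : IsUnit D.det := IsUnit.of_mul_eq_one _ (by rw [mul_comm]; exact hdet1)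
  set Di := D⁻¹ with hDi
  have hDDi : D * Di = 1 := Matrix.mul_nonsing_inv D hDdet
  -- conjugation relation
  have hBB' : ∀ B : Matrix (Fin a) (Fin b) Fq, ∃ B' : Matrix (Fin a) (Fin b) Fq,
      A * B.map C * Di = B'.map C := by
    intro B
    have hdetU : (Matrix.fromBlocks (1 : Matrix (Fin a) (Fin a) (F Fq)) (B.map C) 0
        (1 : Matrix (Fin b) (Fin b) (F Fq))).det = 1 := by
      rw [Matrix.det_fromBlocks_zero₂₁, Matrix.det_one, Matrix.det_one, one_mul]
    set UB : SpecialLinearGroup (Fin a ⊕ Fin b) (F Fq) := ⟨_, hdetU⟩ with hUB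
    have hUBmem : UB ∈ Uconst Fq a b := ⟨B, rfl⟩
    have hmem : g * UB * g⁻¹ ∈ Uconst Fq a b := hg ▸ Set.mem_image_of_mem _ hUBmem
    obtain ⟨B', hB'⟩ := hmem
    rw [← hC] at hB'
    have hgrp : g * UB = g * UB * g⁻¹ * g := by group
    have hco : (g : Matrix (Fin a ⊕ Fin b) (Fin a ⊕ Fin b) (F Fq))
          * (UB : Matrix (Fin a ⊕ Fin b) (Fin a ⊕ Fin b) (F Fq))
        = ((g * UB * g⁻¹ : SpecialLinearGroup (Fin a ⊕ Fin b) (F Fq))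
            : Matrix (Fin a ⊕ Fin b) (Fin a ⊕ Fin b) (F Fq))
          * (g : Matrix (Fin a ⊕ Fin b) (Fin a ⊕ Fin b) (F Fq)) := by
      rw [← Matrix.SpecialLinearGroup.coe_mul, ← Matrix.SpecialLinearGroup.coe_mul,
        ← hgrp]
    rw [hB', hgAD] at hco
    have hUBco : (UB : Matrix (Fin a ⊕ Fin b) (Fin a ⊕ Fin b) (F Fq))
        = Matrix.fromBlocks 1 (B.map C) 0 1 := rfl
    rw [hUBco, Matrix.fromBlocks_multiply, Matrix.fromBlocks_multiply] at hco
    have h12 := congrArg Matrix.toBlocks₁₂ hco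
    simp only [Matrix.toBlocks_fromBlocks₁₂] at h12
    -- h12 : A * B.map C + 0 * 1 = 1 * 0 + B'.map C * D (roughly)
    have hAB : A * B.map C = B'.map C * D := by
      simpa using h12
    refine ⟨B', ?_⟩
    rw [hAB, Matrix.mul_assoc, hDDi, Matrix.mul_one]
  -- entrywise products are constants
  have hprod : ∀ (i k : Fin a) (l j : Fin b), ∃ c : Fq, A i k * Di l j = C c := by
    intro i k l j
    obtain ⟨B', hB'⟩ := hBB' (Matrix.single k l (1 : Fq))
    refine ⟨B' i j, ?_⟩
    have := congrFun (congrFun hB' i) j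
    rw [show (A * (Matrix.single k l (1 : Fq)).map C * Di) i j
        = A i k * Di l j from ?_] at this
    · exact this
    · simp only [Matrix.mul_apply, Matrix.single, Matrix.map_apply, Matrix.of_apply,
        ite_mul, mul_ite, Finset.sum_mul, Finset.mul_sum, mul_one, mul_zero, zero_mul,
        _root_.map_one, map_zero]
      rw [Finset.sum_comm]
      simp [ite_and, apply_ite (⇑C : Fq → F Fq), Finset.sum_ite_eq, Finset.sum_ite_eq']
  -- nonzero entries
  have hAdet0 : A.det ≠ 0 := hAdet.ne_zero
  have hAne : ∃ i0 k0, A i0 k0 ≠ 0 := by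
    by_contra h
    push_neg at h
    have hA0 : A = 0 := Matrix.ext h
    rw [hA0, Matrix.det_zero] at hAdet0
    exact hAdet0 rfl
  obtain ⟨i0, k0, ha0⟩ := hAne
  set a0 := A i0 k0 with ha0def
  have hDine : ∃ l0 j0, Di l0 j0 ≠ 0 := by
    by_contra h
    push_neg at h
    have hDi0 : Di = 0 := Matrix.ext h
    rw [hDi0, Matrix.mul_zero] at hDDi
    have := congrFun (congrFun hDDi (Classical.arbitrary (Fin b))) (Classical.arbitrary (Fin b))
    simp [Matrix.one_apply] at this
  obtain ⟨l0, j0, hu0⟩ := hDine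
  set u0 := Di l0 j0 with hu0def
  choose N hN using fun (i k : Fin a) => hprod i k l0 j0
  choose M hM using fun (l j : Fin b) => hprod i0 k0 l j
  set c := N i0 k0 with hcdef
  have hc : a0 * u0 = C c := hN i0 k0
  have hc0 : c ≠ 0 := by
    intro h
    rw [h, map_zero] at hc
    exact mul_ne_zero ha0 hu0 hc
  have hCc0 : C c ≠ 0 := (map_ne_zero C).mpr hc0
  have hu0inv : u0⁻¹ = a0 * (C c)⁻¹ := by
    have h4 : u0 = a0⁻¹ * C c := by rw [← hc]; field_simp
    rw [h4, mul_inv, inv_inv]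
  set NN : Matrix (Fin a) (Fin a) Fq := fun i k => N i k * c⁻¹ with hNN
  have hA_entry : ∀ i k, A i k = C (NN i k) * a0 := by
    intro i k
    have h1 : A i k * u0 = C (N i k) := hN i k
    have : A i k = C (N i k) * u0⁻¹ := by
      rw [← h1, mul_assoc, mul_inv_cancel₀ hu0, mul_one]
    rw [this, hu0inv, hNN]
    simp only [_root_.map_mul, map_inv₀]
    ring
  set Mm : Matrix (Fin b) (Fin b) Fq := fun l j => M l j with hMm
  have hDi_entry : ∀ l j, Di l j = C (Mm l j) * a0⁻¹ := by
    intro l j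
    have h1 : a0 * Di l j = C (M l j) := hM l j
    have h4 : Di l j = a0⁻¹ * C (M l j) := by rw [← h1]; field_simp
    rw [h4, hMm]
    ring
  -- determinants again
  have hA_mat : A = a0 • NN.map C := by
    ext i k
    rw [hA_entry i k]
    simp [Matrix.map_apply, smul_eq_mul]
    ring
  have hDi_mat : Di = a0⁻¹ • Mm.map C := by
    ext l j
    rw [hDi_entry l j]
    simp [Matrix.map_apply, smul_eq_mul]
    ring
  have hdetA : A.det = a0 ^ a * C NN.det := by
    rw [hA_mat, Matrix.det_smul, Fintype.card_fin, det_map_ringHom]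
  have hdetDi : Di.det = (a0⁻¹) ^ b * C Mm.det := by
    rw [hDi_mat, Matrix.det_smul, Fintype.card_fin, det_map_ringHom]
  have hdetDDi : D.det * Di.det = 1 := by
    rw [← Matrix.det_mul, hDDi, Matrix.det_one]
  have hADi : A.det = Di.det := by
    have h1 : A.det = (D.det)⁻¹ := eq_inv_of_mul_eq_one_left hdet1
    have h2 : Di.det = (D.det)⁻¹ := eq_inv_of_mul_eq_one_right hdetDDi
    rw [h1, h2]
  have hDidet0 : Di.det ≠ 0 := hADi ▸ hAdet0
  have hCN : C NN.det ≠ 0 := by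
    intro h
    rw [hdetA, h, mul_zero] at hAdet0
    exact hAdet0 rfl
  have hCM : C Mm.det ≠ 0 := by
    intro h
    rw [hdetDi, h, mul_zero] at hDidet0
    exact hDidet0 rfl
  set μ := Mm.det * NN.det⁻¹ with hμ
  have hkey : a0 ^ (a + b) = C μ := by
    have hb0 : a0 ^ b ≠ 0 := pow_ne_zero _ ha0
    have hEq : a0 ^ a * C NN.det = (a0⁻¹) ^ b * C Mm.det := by
      rw [← hdetA, ← hdetDi]; exact hADi
    have h3 : a0 ^ (a + b) * C NN.det = C Mm.det := by
      calc a0 ^ (a + b) * C NN.det = a0 ^ b * (a0 ^ a * C NN.det) := by rw [pow_add]; ring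
      _ = a0 ^ b * ((a0⁻¹) ^ b * C Mm.det) := by rw [hEq]
      _ = (a0 ^ b * (a0 ^ b)⁻¹) * C Mm.det := by rw [inv_pow]; ring
      _ = C Mm.det := by rw [mul_inv_cancel₀ hb0, one_mul]
    rw [hμ, _root_.map_mul, map_inv₀]
    rw [← h3]
    field_simp
  -- lift to power series
  obtain ⟨ft, hft⟩ := hA i0 k0
  have hofC : ∀ x : Fq, ofPS Fq (PowerSeries.C (R := Fq) x) = C x := fun x =>
    HahnSeries.ofPowerSeries_C x
  have hinj : Function.Injective (ofPS Fq) := HahnSeries.ofPowerSeries_injective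
  have hftpow : ft ^ (a + b) = PowerSeries.C (R := Fq) μ := by
    apply hinj
    rw [map_pow, hft, hofC, ← ha0def]
    exact hkey
  haveI : CharP Fq (ringChar Fq) := ringChar.charP Fq
  haveI : Fact (ringChar Fq).Prime := ⟨CharP.char_is_prime Fq _⟩
  obtain ⟨ρ, hρ⟩ := ps_pow_eq_C (ringChar Fq) (a + b) (by omega) ft μ hftpow
  have ha0C : a0 = C ρ := by
    rw [ha0def, ← hft, hρ, hofC]
  have hρ0 : ρ ≠ 0 := by
    intro h
    rw [h, map_zero] at ha0C
    exact ha0 ha0C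
  -- D as constant matrix
  set W : Matrix (Fin b) (Fin b) Fq := fun l j => Mm l j * ρ⁻¹ with hW
  have hDiW : Di = W.map C := by
    ext l j : 2
    rw [hDi_entry l j, hW, ha0C, ← map_inv₀, ← _root_.map_mul]
    rfl
  have hWdet : IsUnit W.det := by
    rw [isUnit_iff_ne_zero]
    intro h
    apply hDidet0
    rw [hDiW, det_map_ringHom, h, map_zero]
  have hWinv : W.map C * (W⁻¹).map C = 1 := by
    rw [← Matrix.map_mul, Matrix.mul_nonsing_inv _ hWdet,
      Matrix.map_one _ (map_zero C) (map_one C)]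
  have hD_eq : D = (W⁻¹).map C := by
    calc D = D * (Di * (W⁻¹).map C) := by rw [hDiW, hWinv, Matrix.mul_one]
    _ = (D * Di) * (W⁻¹).map C := by rw [Matrix.mul_assoc]
    _ = (W⁻¹).map C := by rw [hDDi, Matrix.one_mul]
  -- conclude
  intro i j
  rw [hgAD]
  rcases i with i | i <;> rcases j with j | j
  · refine ⟨NN i j * ρ, ?_⟩
    rw [Matrix.fromBlocks_apply₁₁, hA_entry i j, ha0C, ← _root_.map_mul]
  · exact ⟨0, by rw [map_zero, Matrix.fromBlocks_apply₁₂]; rfl⟩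
  · exact ⟨0, by rw [map_zero, Matrix.fromBlocks_apply₂₁]; rfl⟩
  · refine ⟨W⁻¹ i j, ?_⟩
    rw [Matrix.fromBlocks_apply₂₂, hD_eq]
    rfl
end
end

section
/- Let q be a prime power, n ≥ 2, 1 ≤ m < n, and let K be a field containing 𝔽_q (i.e., equipped with a ring homomorphism 𝔽_q → K). If x ∈ SL_n(K) is block diagonal of the form fromBlocks(A, 0, 0, D) and x commutes with every matrix fromBlocks(1_m, B, 0, 1_{n−m}) where B ranges over the m×(n−m) matrices with entries in 𝔽_q, then x is a scalar matrix (an element of the center of SL_n(K)). (This is the Levi-centralizer lemma for a parabolic with abelian unipotent radical, in its type A_{n-1} instance.) -/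
/-!
STATEMENT 14 (Levi-centralizer lemma, type A): if a block diagonal x ∈ SL_n(K)
(K a field containing 𝔽_q) commutes with all block upper unipotent matrices
fromBlocks(1, B, 0, 1) with B over 𝔽_q, then x is a scalar matrix.
Here n = a + b with a = m ≥ 1, b = n − m ≥ 1.
-/

noncomputable section
open Matrix

theorem centralizer_of_unipotent_radical_is_central
    (q a b : ℕ) (hq : ∃ p k : ℕ, p.Prime ∧ 0 < k ∧ q = p ^ k)
    (Fq : Type) [Field Fq] [Fintype Fq] (hcard : Fintype.card Fq = q)
    (ha : 1 ≤ a) (hb : 1 ≤ b)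
    (K : Type) [Field K] (f : Fq →+* K)
    (x : SpecialLinearGroup (Fin a ⊕ Fin b) K)
    (A : Matrix (Fin a) (Fin a) K) (D : Matrix (Fin b) (Fin b) K)
    (hxAD : (x : Matrix (Fin a ⊕ Fin b) (Fin a ⊕ Fin b) K) = Matrix.fromBlocks A 0 0 D)
    (hcomm : ∀ B : Matrix (Fin a) (Fin b) Fq,
      (x : Matrix (Fin a ⊕ Fin b) (Fin a ⊕ Fin b) K) * Matrix.fromBlocks 1 (B.map f) 0 1 =
        Matrix.fromBlocks 1 (B.map f) 0 1 * (x : Matrix (Fin a ⊕ Fin b) (Fin a ⊕ Fin b) K)) :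
    ∃ c : K, (x : Matrix (Fin a ⊕ Fin b) (Fin a ⊕ Fin b) K) =
      c • (1 : Matrix (Fin a ⊕ Fin b) (Fin a ⊕ Fin b) K) := by

  have key : ∀ (i : Fin a) (j : Fin b) (k : Fin a) (l : Fin b),
      (if j = l then A k i else 0) = (if i = k then D j l else 0) := by
    intro i j k l
    have h := hcomm (Matrix.single i j 1)
    have hM : (Matrix.single i j (1 : Fq)).map f
        = Matrix.single i j (1 : K) := by
      ext u v
      simp [Matrix.single, Matrix.map_apply, Matrix.of_apply, apply_ite f]
    rw [hxAD, hM] at h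
    rw [Matrix.fromBlocks_multiply, Matrix.fromBlocks_multiply] at h
    have h2 := congrFun (congrFun h (Sum.inl k)) (Sum.inr l)
    simp only [Matrix.fromBlocks_apply₁₂, Matrix.mul_apply, Matrix.single,
      Matrix.of_apply] at h2
    simpa [Matrix.mul_apply, ite_and, Finset.sum_ite_eq, Finset.sum_ite_eq',
      mul_ite, ite_mul] using h2
  have i0 : Fin a := ⟨0, ha⟩
  have j0 : Fin b := ⟨0, hb⟩
  refine ⟨D j0 j0, ?_⟩
  have hA : ∀ k i : Fin a, A k i = if i = k then D j0 j0 else 0 := by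
    intro k i
    have := key i j0 k j0
    simpa using this
  have hAi : A i0 i0 = D j0 j0 := by simpa using hA i0 i0
  have hD : ∀ j l : Fin b, D j l = if j = l then D j0 j0 else 0 := by
    intro j l
    have h1 : D j l = if j = l then A i0 i0 else 0 := by
      simpa using (key i0 j i0 l).symm
    rw [h1, hAi]
  rw [hxAD]
  ext u v
  rcases u with k | j <;> rcases v with i | l
  · rw [Matrix.fromBlocks_apply₁₁, hA k i, Matrix.smul_apply, Matrix.one_apply]
    by_cases h : i = k
    · simp [h]
    · simp [h, Ne.symm h]
  · simp [Matrix.one_apply]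
  · simp [Matrix.one_apply]
  · rw [Matrix.fromBlocks_apply₂₂, hD j l, Matrix.smul_apply, Matrix.one_apply]
    by_cases h : j = l <;> simp [h]
end
end

section
/- Let q > 3 be a prime power, n ≥ 2, and let K be a field equipped with a ring homomorphism 𝔽_q → K. If x ∈ SL_n(K) commutes with the image in SL_n(K) of every element of SL_n(𝔽_q), then x is a scalar matrix, i.e., x lies in the center of SL_n(K). (This is the claim, used in the proof of the normalizer lemma for SL_n(𝔽_q[t]), that the centralizer of 𝔾(𝔽_q) in 𝔾 is central, in its type A_{n-1} instance.) -/
/-!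
STATEMENT 16: For q > 3 and n ≥ 2, if x ∈ SL_n(K) (K a field containing 𝔽_q) commutes
with the image of every element of SL_n(𝔽_q), then x is a scalar matrix.
-/

noncomputable section
open Matrix

theorem centralizer_of_SL_Fq_is_central
    (q n : ℕ) (hq3 : 3 < q) (hq : ∃ p k : ℕ, p.Prime ∧ 0 < k ∧ q = p ^ k) (hn : 2 ≤ n)
    (Fq : Type) [Field Fq] [Fintype Fq] (hcard : Fintype.card Fq = q)
    (K : Type) [Field K] (f : Fq →+* K)
    (x : SpecialLinearGroup (Fin n) K)
    (hx : ∀ y : SpecialLinearGroup (Fin n) Fq,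
      x * SpecialLinearGroup.map (n := Fin n) f y = SpecialLinearGroup.map (n := Fin n) f y * x) :
    ∃ c : K, (x : Matrix (Fin n) (Fin n) K) = c • (1 : Matrix (Fin n) (Fin n) K) := by
  set M : Matrix (Fin n) (Fin n) K := (x : Matrix (Fin n) (Fin n) K) with hM
  have key : ∀ i j : Fin n, i ≠ j →
      M * single i j (1 : K) = single i j (1 : K) * M := by
    intro i j hij
    have hy : (transvection i j (1 : Fq)).det = 1 := det_transvection_of_ne i j hij 1
    have := hx ⟨transvection i j (1 : Fq), hy⟩
    have hmap : ((SpecialLinearGroup.map (n := Fin n) f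
        ⟨transvection i j (1 : Fq), hy⟩ : SpecialLinearGroup (Fin n) K) :
        Matrix (Fin n) (Fin n) K) = transvection i j (1 : K) := by
      change f.mapMatrix (transvection i j (1 : Fq)) = _
      ext a b
      simp [SpecialLinearGroup.map, transvection, Matrix.map_apply, single,
        Matrix.one_apply, apply_ite f]
    have hmul : M * transvection i j (1 : K) = transvection i j (1 : K) * M := by
      have := congrArg (Subtype.val) (hx ⟨transvection i j (1 : Fq), hy⟩)
      simpa [hmap, hM] using this
    have : M * (1 + single i j (1 : K)) = (1 + single i j (1 : K)) * M := by
      simpa [transvection] using hmul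
    rw [mul_add, add_mul, mul_one, one_mul] at this
    exact add_left_cancel this
  -- off-diagonal entries vanish
  have hoff : ∀ a b : Fin n, a ≠ b → M a b = 0 := by
    intro a b hab
    have h := congrFun (congrFun (key b a hab.symm) a) a
    simpa [hab] using h
  -- diagonal entries are equal
  have hdiag : ∀ a b : Fin n, M a a = M b b := by
    intro a b
    rcases eq_or_ne a b with rfl | hab
    · rfl
    · have h := congrFun (congrFun (key a b hab) a) b
      simpa using h
  have h0 : (0:ℕ) < n := by omega
  refine ⟨M ⟨0, h0⟩ ⟨0, h0⟩, ?_⟩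
  ext a b
  rcases eq_or_ne a b with rfl | hab
  · simp [hdiag a ⟨0, h0⟩]
  · simp [hoff a b hab, Matrix.one_apply_ne hab]
end
end
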